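/- arXiv:1511.08071 — 7 statements merged into one kernel-verified Lean document; each statement's English description precedes it below -/
import Mathlib

section
/- Let d ≥ 1 and let ψ₁, ψ₂ : Fin d → ℂ be unit vectors with diagonal distributions p i = ‖ψ₁ i‖² and q i = ‖ψ₂ i‖². Then the following are equivalent: (a) there exist N ≥ 1 and matrices K : Fin N → Matrix (Fin d) (Fin d) ℂ such that ∑ n, (K n)ᴴ * (K n) = 1, for every n and every diagonal matrix D : Matrix (Fin d) (Fin d) ℂ the matrix (K n) * D * (K n)ᴴ is diagonal, and ∑ n, (K n) * (Matrix.vecMulVec ψ₁ (star ψ₁)) * (K n)ᴴ = Matrix.vecMulVec ψ₂ (star ψ₂); (b) p ≺ q. -/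
open Finset Matrix

/-- max over finsets of card k of the sum of entries -/
noncomputable def maxSum {ι : Type*} [Fintype ι] (p : ι → ℝ) (k : ℕ) : ℝ :=
  sSup {x : ℝ | ∃ S : Finset ι, S.card = k ∧ x = ∑ i ∈ S, p i}

/-- majorization: equal total sums, and for each k the max k-term partial sum
of `p` is at most that of `q`. -/
def Maj {ι : Type*} [Fintype ι] (p q : ι → ℝ) : Prop :=
  (∑ i, p i = ∑ i, q i) ∧ ∀ k : ℕ, maxSum p k ≤ maxSum q k


lemma sum_fin_lt {n : ℕ} {M : Type*} [AddCommMonoid M] (g : ℕ → M) (k : ℕ) (hk : k ≤ n) :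
    ∑ i ∈ Finset.univ.filter (fun i : Fin n => (i : ℕ) < k), g (i : ℕ)
      = ∑ m ∈ Finset.range k, g m := by
  have h1 : ∑ i ∈ Finset.univ.filter (fun i : Fin n => (i : ℕ) < k), g (i : ℕ)
      = ∑ i : Fin n, (if (i : ℕ) < k then g (i : ℕ) else 0) := by
    rw [Finset.sum_filter]
  have h2 : ∑ i : Fin n, (if (i : ℕ) < k then g (i : ℕ) else 0)
      = ∑ m ∈ Finset.range n, (if m < k then g m else 0) :=
    Fin.sum_univ_eq_sum_range (fun m => if m < k then g m else 0) n
  have h3 : ∑ m ∈ Finset.range n, (if m < k then g m else 0)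
      = ∑ m ∈ Finset.range k, (if m < k then g m else 0) := by
    refine (Finset.sum_subset (Finset.range_subset_range.mpr hk) ?_).symm
    intro x _ hx
    rw [Finset.mem_range] at hx
    simp [hx]
  rw [h1, h2, h3]
  apply Finset.sum_congr rfl
  intro x hx
  rw [Finset.mem_range] at hx
  simp [hx]

lemma card_fin_lt {n : ℕ} (k : ℕ) (hk : k ≤ n) :
    (Finset.univ.filter (fun i : Fin n => (i : ℕ) < k)).card = k := by
  rw [Finset.card_eq_sum_ones]
  have := sum_fin_lt (n := n) (fun _ => (1 : ℕ)) k hk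
  simpa using this

/-- exchange lemma -/
lemma sum_le_sum_of_card_eq {ι : Type*} [DecidableEq ι] {w : ι → ℝ} {A B : Finset ι}
    (hcard : A.card = B.card) (h : ∀ a ∈ A, ∀ b ∈ B, w a ≤ w b) :
    ∑ a ∈ A, w a ≤ ∑ b ∈ B, w b := by
  rcases B.eq_empty_or_nonempty with hB | hB
  · have : A = ∅ := Finset.card_eq_zero.mp (by simp [hcard, hB])
    simp [this, hB]
  · set c := B.inf' hB w with hc
    calc ∑ a ∈ A, w a ≤ A.card • c := by
          apply Finset.sum_le_card_nsmul
          intro a ha; exact Finset.le_inf' hB w (fun b hb => h a ha b hb)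
      _ = B.card • c := by rw [hcard]
      _ ≤ ∑ b ∈ B, w b := Finset.card_nsmul_le_sum _ _ _ (fun b hb => Finset.inf'_le w hb)

/-- top-k set w.r.t. a sorting permutation -/
def Tset {n : ℕ} (ρ : Equiv.Perm (Fin n)) (k : ℕ) : Finset (Fin n) :=
  Finset.univ.filter (fun i : Fin n => ((ρ.symm i : Fin n) : ℕ) < k)

lemma Tset_eq_image {n : ℕ} (ρ : Equiv.Perm (Fin n)) (k : ℕ) :
    Tset ρ k = (Finset.univ.filter (fun m : Fin n => (m : ℕ) < k)).image ρ := by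
  ext i
  simp only [Tset, Finset.mem_filter, Finset.mem_univ, true_and, Finset.mem_image]
  constructor
  · intro h; exact ⟨ρ.symm i, by simpa using h, by simp⟩
  · rintro ⟨m, hm, rfl⟩; simpa using hm

lemma Tset_card {n : ℕ} (ρ : Equiv.Perm (Fin n)) (k : ℕ) (hk : k ≤ n) :
    (Tset ρ k).card = k := by
  rw [Tset_eq_image, Finset.card_image_of_injective _ ρ.injective, card_fin_lt k hk]

lemma Tset_sum {n : ℕ} {M : Type*} [AddCommMonoid M] (ρ : Equiv.Perm (Fin n)) (k : ℕ)
    (hk : k ≤ n) (q : Fin n → M) (g : ℕ → M) (hg : ∀ m : Fin n, q (ρ m) = g (m : ℕ)) :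
    ∑ i ∈ Tset ρ k, q i = ∑ m ∈ Finset.range k, g m := by
  rw [Tset_eq_image, Finset.sum_image (fun a _ b _ h => ρ.injective h)]
  rw [← sum_fin_lt g k hk]
  exact Finset.sum_congr rfl (fun m _ => hg m)

/-- any k-subset sum is at most the top-k sum -/
lemma sum_le_sum_Tset {n : ℕ} (q : Fin n → ℝ) (ρ : Equiv.Perm (Fin n))
    (hρ : Antitone (q ∘ ρ)) (k : ℕ) (hk : k ≤ n) (S : Finset (Fin n)) (hS : S.card = k) :
    ∑ i ∈ S, q i ≤ ∑ i ∈ Tset ρ k, q i := by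
  set T := Tset ρ k with hT
  have hTcard : T.card = k := Tset_card ρ k hk
  have hcard : (S \ T).card = (T \ S).card := by
    have h1 := Finset.card_sdiff_add_card_inter S T
    have h2 := Finset.card_sdiff_add_card_inter T S
    rw [Finset.inter_comm T S] at h2
    omega
  have hpair : ∀ a ∈ S \ T, ∀ b ∈ T \ S, q a ≤ q b := by
    intro a ha b hb
    rw [Finset.mem_sdiff] at ha hb
    have hbT := hb.1
    rw [hT, Tset, Finset.mem_filter] at hbT
    have hb' : ((ρ.symm b : Fin n) : ℕ) < k := hbT.2
    have ha' : ¬ ((ρ.symm a : Fin n) : ℕ) < k := by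
      intro hlt
      exact ha.2 (by rw [hT, Tset, Finset.mem_filter]; exact ⟨Finset.mem_univ _, hlt⟩)
    have hle : ρ.symm b ≤ ρ.symm a := by
      have : ((ρ.symm b : Fin n) : ℕ) ≤ ((ρ.symm a : Fin n) : ℕ) := by omega
      exact this
    have := hρ hle
    simpa using this
  have h1 : ∑ i ∈ S ∩ T, q i + ∑ i ∈ S \ T, q i = ∑ i ∈ S, q i :=
    Finset.sum_inter_add_sum_sdiff S T q
  have h2 : ∑ i ∈ T ∩ S, q i + ∑ i ∈ T \ S, q i = ∑ i ∈ T, q i :=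
    Finset.sum_inter_add_sum_sdiff T S q
  have hmain : ∑ i ∈ S \ T, q i ≤ ∑ i ∈ T \ S, q i :=
    sum_le_sum_of_card_eq hcard hpair
  rw [Finset.inter_comm T S] at h2
  linarith

section maxSumLemmas
variable {ι : Type*} [Fintype ι] {p : ι → ℝ} {k : ℕ}

lemma maxSum_set_finite : ({x : ℝ | ∃ S : Finset ι, S.card = k ∧ x = ∑ i ∈ S, p i}).Finite := by
  apply (Set.finite_range fun S : Finset ι => ∑ i ∈ S, p i).subset
  rintro x ⟨S, _, rfl⟩; exact ⟨S, rfl⟩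

lemma le_maxSum (S : Finset ι) (hS : S.card = k) : ∑ i ∈ S, p i ≤ maxSum p k :=
  le_csSup (maxSum_set_finite.bddAbove) ⟨S, hS, rfl⟩

lemma maxSum_le {c : ℝ} (S₀ : Finset ι) (h₀ : S₀.card = k)
    (h : ∀ S : Finset ι, S.card = k → ∑ i ∈ S, p i ≤ c) : maxSum p k ≤ c :=
  csSup_le ⟨_, S₀, h₀, rfl⟩ (by rintro x ⟨S, hS, rfl⟩; exact h S hS)

lemma maxSum_of_gt (h : Fintype.card ι < k) : maxSum p k = 0 := by
  have he : {x : ℝ | ∃ S : Finset ι, S.card = k ∧ x = ∑ i ∈ S, p i} = ∅ := by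
    ext x; simp only [Set.mem_setOf_eq, Set.mem_empty_iff_false, iff_false, not_exists]
    rintro S ⟨hS, -⟩
    have := S.card_le_univ
    rw [hS] at this
    omega
  rw [maxSum, he, Real.sSup_empty]
end maxSumLemmas

/-- Abel summation comparison -/
lemma abel_compare (n : ℕ) (u a b : ℕ → ℝ)
    (hu : ∀ k, k + 1 < n → u (k + 1) ≤ u k)
    (hpart : ∀ k, k ≤ n → ∑ m ∈ Finset.range k, a m ≤ ∑ m ∈ Finset.range k, b m)
    (heq : ∑ m ∈ Finset.range n, a m = ∑ m ∈ Finset.range n, b m) :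
    ∑ m ∈ Finset.range n, u m * a m ≤ ∑ m ∈ Finset.range n, u m * b m := by
  have key : 0 ≤ ∑ m ∈ Finset.range n, u m * (b m - a m) := by
    have hparts := Finset.sum_range_by_parts (M := ℝ) u (fun m => b m - a m) n
    simp only [smul_eq_mul] at hparts
    rw [hparts]
    have hCn : ∑ i ∈ Finset.range n, (b i - a i) = 0 := by
      rw [Finset.sum_sub_distrib]; linarith [heq]
    rw [hCn, mul_zero, zero_sub, neg_nonneg]
    apply Finset.sum_nonpos
    intro i hi
    rw [Finset.mem_range] at hi
    have h1 : u (i+1) ≤ u i := hu i (by omega)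
    have h2 : 0 ≤ ∑ j ∈ Finset.range (i+1), (b j - a j) := by
      rw [Finset.sum_sub_distrib]
      have := hpart (i+1) (by omega); linarith
    exact mul_nonpos_of_nonpos_of_nonneg (by linarith) h2
  have hsplit : ∑ m ∈ Finset.range n, u m * (b m - a m)
      = ∑ m ∈ Finset.range n, u m * b m - ∑ m ∈ Finset.range n, u m * a m := by
    rw [← Finset.sum_sub_distrib]
    apply Finset.sum_congr rfl
    intro m _; ring
  linarith

lemma hlp_key {d : ℕ} (p q : Fin d → ℝ)
    (hsum : ∑ i, p i = ∑ i, q i) (hle : ∀ k : ℕ, maxSum p k ≤ maxSum q k)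
    (y : Fin d → ℝ) :
    ∃ σ : Equiv.Perm (Fin d), ∑ i, p i * y i ≤ ∑ i, q (σ i) * y i := by
  set τ := Tuple.sort (fun i => -y i) with hτ
  set ρ := Tuple.sort (fun i => -q i) with hρdef
  have hyτ : Antitone (y ∘ τ) := by
    intro a b hab
    have := Tuple.monotone_sort (fun i => -y i) hab
    simpa using this
  have hqρ : Antitone (q ∘ ρ) := by
    intro a b hab
    have := Tuple.monotone_sort (fun i => -q i) hab
    simpa using this
  classical
  set ap : ℕ → ℝ := fun m => if h : m < d then p (τ ⟨m, h⟩) else 0 with hap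
  set bq : ℕ → ℝ := fun m => if h : m < d then q (ρ ⟨m, h⟩) else 0 with hbq
  set uy : ℕ → ℝ := fun m => if h : m < d then y (τ ⟨m, h⟩) else 0 with huy
  have hapm : ∀ m : Fin d, p (τ m) = ap (m : ℕ) := by
    intro m; simp only [hap]; rw [dif_pos m.isLt, Fin.eta]
  have hbqm : ∀ m : Fin d, q (ρ m) = bq (m : ℕ) := by
    intro m; simp only [hbq]; rw [dif_pos m.isLt, Fin.eta]
  have huym : ∀ m : Fin d, y (τ m) = uy (m : ℕ) := by
    intro m; simp only [huy]; rw [dif_pos m.isLt, Fin.eta]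
  refine ⟨τ.symm.trans ρ, ?_⟩
  have F1 : ∑ i, p i * y i = ∑ m ∈ Finset.range d, uy m * ap m := by
    rw [← Equiv.sum_comp τ (fun i => p i * y i)]
    rw [← Fin.sum_univ_eq_sum_range (fun m => uy m * ap m) d]
    apply Finset.sum_congr rfl
    intro i _
    rw [← hapm, ← huym]; ring
  have F2 : ∑ i, q ((τ.symm.trans ρ) i) * y i = ∑ m ∈ Finset.range d, uy m * bq m := by
    rw [← Equiv.sum_comp τ (fun i => q ((τ.symm.trans ρ) i) * y i)]
    rw [← Fin.sum_univ_eq_sum_range (fun m => uy m * bq m) d]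
    apply Finset.sum_congr rfl
    intro i _
    have : (τ.symm.trans ρ) (τ i) = ρ i := by simp
    rw [this, ← hbqm, ← huym]; ring
  have hu : ∀ k, k + 1 < d → uy (k + 1) ≤ uy k := by
    intro k hk
    simp only [huy]
    rw [dif_pos hk, dif_pos (by omega : k < d)]
    exact hyτ (by simp [Fin.mk_le_mk])
  have hpart : ∀ k, k ≤ d → ∑ m ∈ Finset.range k, ap m ≤ ∑ m ∈ Finset.range k, bq m := by
    intro k hk
    have e1 : ∑ i ∈ Tset τ k, p i = ∑ m ∈ Finset.range k, ap m :=
      Tset_sum τ k hk p ap hapm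
    have e2 : ∑ i ∈ Tset ρ k, q i = ∑ m ∈ Finset.range k, bq m :=
      Tset_sum ρ k hk q bq hbqm
    rw [← e1, ← e2]
    calc ∑ i ∈ Tset τ k, p i ≤ maxSum p k := le_maxSum _ (Tset_card τ k hk)
      _ ≤ maxSum q k := hle k
      _ ≤ ∑ i ∈ Tset ρ k, q i := by
          apply maxSum_le (Tset ρ k) (Tset_card ρ k hk)
          intro S hS
          exact sum_le_sum_Tset q ρ hqρ k hk S hS
  have heq : ∑ m ∈ Finset.range d, ap m = ∑ m ∈ Finset.range d, bq m := by
    have e1 : ∑ i ∈ Tset τ d, p i = ∑ m ∈ Finset.range d, ap m :=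
      Tset_sum τ d le_rfl p ap hapm
    have e2 : ∑ i ∈ Tset ρ d, q i = ∑ m ∈ Finset.range d, bq m :=
      Tset_sum ρ d le_rfl q bq hbqm
    have hT1 : Tset τ d = Finset.univ := by
      ext i; simp [Tset, Fin.isLt]
    have hT2 : Tset ρ d = Finset.univ := by
      ext i; simp [Tset, Fin.isLt]
    rw [← e1, ← e2, hT1, hT2]
    exact hsum
  rw [F1, F2]
  exact abel_compare d uy ap bq hu hpart heq

lemma exists_weights {d : ℕ} (p q : Fin d → ℝ)
    (hsum : ∑ i, p i = ∑ i, q i) (hle : ∀ k : ℕ, maxSum p k ≤ maxSum q k) :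
    ∃ (N : ℕ), 1 ≤ N ∧ ∃ (t : Fin N → ℝ) (σ : Fin N → Equiv.Perm (Fin d)),
      (∀ m, 0 ≤ t m) ∧ (∑ m, t m = 1) ∧ ∀ j, p j = ∑ m, t m * q (σ m j) := by
  classical
  set E := EuclideanSpace ℝ (Fin d) with hE
  set g : Equiv.Perm (Fin d) → E := fun σ => WithLp.toLp 2 (fun i => q (σ i)) with hg
  have hrepr : ∀ (f : E →L[ℝ] ℝ) (x : E), f x = ∑ i, x i * f (EuclideanSpace.single i 1) := by
    intro f x
    have hx : x = ∑ i, x i • EuclideanSpace.single i (1 : ℝ) := by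
      have := (EuclideanSpace.basisFun (Fin d) ℝ).sum_repr x
      simpa [EuclideanSpace.basisFun_apply, EuclideanSpace.basisFun_repr] using this.symm
    conv_lhs => rw [hx]
    rw [map_sum]
    apply Finset.sum_congr rfl
    intro i _
    rw [_root_.map_smul, smul_eq_mul]
  have pmem : (WithLp.toLp 2 p : E) ∈ convexHull ℝ (Set.range g) := by
    by_contra hp
    obtain ⟨f, u, hfu, hup⟩ :=
      geometric_hahn_banach_closed_point (convex_convexHull ℝ _)
        ((Set.finite_range g).isCompact_convexHull (𝕜 := ℝ) |>.isClosed) hp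
    obtain ⟨σ0, hσ0⟩ := hlp_key p q hsum hle (fun i => f (EuclideanSpace.single i 1))
    have h1 : f (WithLp.toLp 2 p : E) = ∑ i, p i * f (EuclideanSpace.single i 1) := hrepr f _
    have h2 : f (g σ0) = ∑ i, q (σ0 i) * f (EuclideanSpace.single i 1) := hrepr f (g σ0)
    have h3 : f (g σ0) < u := hfu _ (subset_convexHull ℝ _ ⟨σ0, rfl⟩)
    rw [h1] at hup
    rw [h2] at h3
    linarith
  rw [_root_.convexHull_eq] at pmem
  obtain ⟨ι, t, w, z, hw0, hw1, hz, hcm⟩ := pmem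
  rw [Finset.centerMass_eq_of_sum_1 _ _ hw1] at hcm
  have htne : t.Nonempty := by
    by_contra h
    rw [Finset.not_nonempty_iff_eq_empty] at h
    rw [h] at hw1; simp at hw1
  set N := t.card with hN
  have hN1 : 1 ≤ N := Finset.Nonempty.card_pos htne
  set e := t.equivFin with he
  choose σf hσf using fun (i : ι) (hi : i ∈ t) => hz i hi
  refine ⟨N, hN1, fun m => w ((e.symm m) : ι),
    fun m => σf ((e.symm m) : ι) (e.symm m).2, fun m => hw0 _ (e.symm m).2, ?_, ?_⟩
  · rw [Equiv.sum_comp e.symm (fun x : t => w (x : ι))]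
    rw [← hw1]
    exact Finset.sum_coe_sort t w
  · intro j
    have happ : p j = ∑ i ∈ t, w i * z i j := by
      have := congrArg (fun v : E => v j) hcm
      simp only [WithLp.ofLp_toLp] at this
      rw [← this, WithLp.ofLp_sum]
      rw [Finset.sum_apply]
      rfl
    rw [happ]
    rw [← Finset.sum_coe_sort t (fun i => w i * z i j)]
    rw [← Equiv.sum_comp e.symm (fun x : t => w (x : ι) * z (x : ι) j)]
    apply Finset.sum_congr rfl
    intro m _
    have hzz := hσf ((e.symm m) : ι) (e.symm m).2
    have : z ((e.symm m) : ι) j = q ((σf ((e.symm m) : ι) (e.symm m).2) j) := by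
      rw [← hzz]
    rw [this]

lemma conj_mul_self (z : ℂ) : (starRingEnd ℂ) z * z = ((‖z‖ ^ 2 : ℝ) : ℂ) := by
  rw [mul_comm, Complex.mul_conj]
  norm_cast
  rw [Complex.normSq_eq_norm_sq]

/-- columns of an incoherent Kraus operator have at most one nonzero entry -/
lemma col_unique {d : ℕ} (K : Matrix (Fin d) (Fin d) ℂ)
    (hK : ∀ D : Matrix (Fin d) (Fin d) ℂ, D.IsDiag → (K * D * Kᴴ).IsDiag)
    (j : Fin d) {i i' : Fin d} (hi : K i j ≠ 0) (hi' : K i' j ≠ 0) : i = i' := by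
  by_contra hne
  have hD : (Matrix.diagonal (Pi.single j (1 : ℂ))).IsDiag := Matrix.isDiag_diagonal _
  have h : (K * Matrix.diagonal (Pi.single j (1:ℂ)) * Kᴴ) i i' = 0 := hK _ hD hne
  rw [Matrix.mul_apply] at h
  have hcalc : ∀ k, (K * Matrix.diagonal (Pi.single j (1:ℂ))) i k * Kᴴ k i'
      = if k = j then K i j * (starRingEnd ℂ) (K i' j) else 0 := by
    intro k
    rw [Matrix.mul_diagonal, Matrix.conjTranspose_apply]
    by_cases hk : k = j
    · subst hk; simp
    · simp [hk]
  rw [Finset.sum_congr rfl (fun k _ => hcalc k)] at h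
  rw [Finset.sum_ite_eq' Finset.univ j (fun _ => K i j * (starRingEnd ℂ) (K i' j)),
    if_pos (Finset.mem_univ _)] at h
  rcases mul_eq_zero.mp h with h1 | h1
  · exact hi h1
  · exact hi' (by simpa using h1)

lemma conj_outer' {d : ℕ} (K : Matrix (Fin d) (Fin d) ℂ) (ψ : Fin d → ℂ) :
    K * Matrix.vecMulVec ψ (star ψ) * Kᴴ
      = Matrix.vecMulVec (K.mulVec ψ) (star (K.mulVec ψ)) := by
  ext i i'
  simp only [Matrix.mul_apply, Matrix.vecMulVec_apply, Matrix.conjTranspose_apply,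
    Matrix.mulVec, dotProduct, Pi.star_apply, star_sum, star_mul']
  rw [Finset.mul_sum]
  apply Finset.sum_congr rfl
  intro k _
  rw [Finset.sum_mul, Finset.sum_mul]
  apply Finset.sum_congr rfl
  intro j _
  ring

lemma proportional {d N : ℕ} (ψ₁ ψ₂ : Fin d → ℂ) {i₀ : Fin d} (hi₀ : ψ₂ i₀ ≠ 0)
    (K : Fin N → Matrix (Fin d) (Fin d) ℂ)
    (hK3 : ∑ n, (K n) * (Matrix.vecMulVec ψ₁ (star ψ₁)) * (K n)ᴴ =
      Matrix.vecMulVec ψ₂ (star ψ₂)) :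
    ∃ c : Fin N → ℂ, (∀ n i, (K n).mulVec ψ₁ i = c n * ψ₂ i) ∧
      ∑ n, (starRingEnd ℂ) (c n) * c n = 1 := by
  classical
  set v : Fin N → Fin d → ℂ := fun n => (K n).mulVec ψ₁ with hv
  have hE : ∀ i i', ∑ n, v n i * (starRingEnd ℂ) (v n i')
      = ψ₂ i * (starRingEnd ℂ) (ψ₂ i') := by
    intro i i'
    have h1 : ∀ n, (K n) * (Matrix.vecMulVec ψ₁ (star ψ₁)) * (K n)ᴴ
        = Matrix.vecMulVec (v n) (star (v n)) := fun n => conj_outer' (K n) ψ₁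
    have hsum : ∑ n, Matrix.vecMulVec (v n) (star (v n)) = Matrix.vecMulVec ψ₂ (star ψ₂) := by
      rw [← hK3]
      exact Finset.sum_congr rfl (fun n _ => (h1 n).symm)
    have h2 := congrFun (congrFun hsum i) i'
    rw [Matrix.sum_apply] at h2
    simp only [Matrix.vecMulVec_apply, Pi.star_apply] at h2
    exact h2
  have hx : ∀ n i, v n i * ψ₂ i₀ - v n i₀ * ψ₂ i = 0 := by
    intro n i
    set x : Fin N → ℂ := fun n => v n i * ψ₂ i₀ - v n i₀ * ψ₂ i with hxdef
    have hexp : ∀ m, x m * (starRingEnd ℂ) (x m)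
        = (v m i * (starRingEnd ℂ) (v m i)) * (ψ₂ i₀ * (starRingEnd ℂ) (ψ₂ i₀))
          - (v m i * (starRingEnd ℂ) (v m i₀)) * (ψ₂ i₀ * (starRingEnd ℂ) (ψ₂ i))
          - (v m i₀ * (starRingEnd ℂ) (v m i)) * (ψ₂ i * (starRingEnd ℂ) (ψ₂ i₀))
          + (v m i₀ * (starRingEnd ℂ) (v m i₀)) * (ψ₂ i * (starRingEnd ℂ) (ψ₂ i)) := by
      intro m
      simp only [hxdef, map_sub, _root_.map_mul]
      ring
    have hzero : ∑ m, x m * (starRingEnd ℂ) (x m) = 0 := by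
      rw [Finset.sum_congr rfl (fun m _ => hexp m)]
      rw [Finset.sum_add_distrib, Finset.sum_sub_distrib, Finset.sum_sub_distrib,
        ← Finset.sum_mul, ← Finset.sum_mul, ← Finset.sum_mul, ← Finset.sum_mul,
        hE i i, hE i i₀, hE i₀ i, hE i₀ i₀]
      ring
    have hreal : ∑ m, Complex.normSq (x m) = 0 := by
      have : ∀ m, x m * (starRingEnd ℂ) (x m) = ((Complex.normSq (x m) : ℝ) : ℂ) := by
        intro m; rw [Complex.mul_conj]
      rw [Finset.sum_congr rfl (fun m _ => this m), ← Complex.ofReal_sum] at hzero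
      exact_mod_cast hzero
    have := (Finset.sum_eq_zero_iff_of_nonneg
      (fun m _ => Complex.normSq_nonneg (x m))).mp hreal n (Finset.mem_univ n)
    exact Complex.normSq_eq_zero.mp this
  refine ⟨fun n => v n i₀ / ψ₂ i₀, ?_, ?_⟩
  · intro n i
    have := hx n i
    have h2 : v n i * ψ₂ i₀ = v n i₀ * ψ₂ i := by linear_combination this
    field_simp
    linear_combination h2
  · have := hE i₀ i₀
    have hvv : ∀ n, v n i₀ = (v n i₀ / ψ₂ i₀) * ψ₂ i₀ := by
      intro n; field_simp
    calc ∑ n, (starRingEnd ℂ) (v n i₀ / ψ₂ i₀) * (v n i₀ / ψ₂ i₀)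
        = (∑ n, v n i₀ * (starRingEnd ℂ) (v n i₀)) / (ψ₂ i₀ * (starRingEnd ℂ) (ψ₂ i₀)) := by
          rw [Finset.sum_div]
          apply Finset.sum_congr rfl
          intro n _
          rw [map_div₀]
          field_simp
      _ = 1 := by
          rw [hE i₀ i₀, div_self]
          intro hc
          rcases mul_eq_zero.mp hc with h | h
          · exact hi₀ h
          · exact hi₀ (by simpa using h)

lemma sum_inner_blocks {d N : ℕ} (ψ₁ : Fin d → ℂ) (K : Fin N → Matrix (Fin d) (Fin d) ℂ)
    (hK1 : ∑ n, (K n)ᴴ * (K n) = 1) (S' S : Finset (Fin d)) (hSS : S ⊆ S') :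
    ∑ n, ∑ i, (starRingEnd ℂ) (∑ j ∈ S', K n i j * ψ₁ j) * (∑ j ∈ S, K n i j * ψ₁ j)
      = ∑ j ∈ S, ((‖ψ₁ j‖ ^ 2 : ℝ) : ℂ) := by
  classical
  have hG : ∀ j' j : Fin d, ∑ n, ∑ i, (starRingEnd ℂ) (K n i j') * K n i j
      = if j' = j then 1 else 0 := by
    intro j' j
    have h := congrFun (congrFun hK1 j') j
    rw [Matrix.sum_apply] at h
    simp only [Matrix.mul_apply, Matrix.conjTranspose_apply, Complex.star_def] at h
    rw [h, Matrix.one_apply]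
  have step1 : ∀ n i, (starRingEnd ℂ) (∑ j ∈ S', K n i j * ψ₁ j) * (∑ j ∈ S, K n i j * ψ₁ j)
      = ∑ j' ∈ S', ∑ j ∈ S,
        ((starRingEnd ℂ) (ψ₁ j') * ψ₁ j) * ((starRingEnd ℂ) (K n i j') * K n i j) := by
    intro n i
    rw [map_sum, Finset.sum_mul_sum]
    apply Finset.sum_congr rfl
    intro j' _
    apply Finset.sum_congr rfl
    intro j _
    rw [_root_.map_mul]
    ring
  rw [Finset.sum_congr rfl (fun n _ => Finset.sum_congr rfl (fun i _ => step1 n i))]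
  have swap : ∑ n : Fin N, ∑ i : Fin d, ∑ j' ∈ S', ∑ j ∈ S,
        ((starRingEnd ℂ) (ψ₁ j') * ψ₁ j) * ((starRingEnd ℂ) (K n i j') * K n i j)
      = ∑ j' ∈ S', ∑ j ∈ S, ((starRingEnd ℂ) (ψ₁ j') * ψ₁ j)
          * (∑ n : Fin N, ∑ i : Fin d, (starRingEnd ℂ) (K n i j') * K n i j) := by
    rw [Finset.sum_congr rfl (fun n _ => Finset.sum_comm)]
    rw [Finset.sum_comm]
    apply Finset.sum_congr rfl
    intro j' _
    rw [Finset.sum_congr rfl (fun n _ => Finset.sum_comm)]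
    rw [Finset.sum_comm]
    apply Finset.sum_congr rfl
    intro j _
    rw [Finset.mul_sum]
    apply Finset.sum_congr rfl
    intro n _
    rw [Finset.mul_sum]
  rw [swap]
  have step2 : ∀ j' ∈ S', ∀ j ∈ S, ((starRingEnd ℂ) (ψ₁ j') * ψ₁ j)
      * (∑ n : Fin N, ∑ i : Fin d, (starRingEnd ℂ) (K n i j') * K n i j)
      = if j' = j then (starRingEnd ℂ) (ψ₁ j') * ψ₁ j else 0 := by
    intro j' _ j _
    rw [hG j' j]
    split_ifs <;> simp
  rw [Finset.sum_congr rfl (fun j' hj' => Finset.sum_congr rfl (fun j hj => step2 j' hj' j hj))]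
  rw [Finset.sum_comm]
  apply Finset.sum_congr rfl
  intro j hj
  rw [Finset.sum_ite_eq' S' j (fun j' => (starRingEnd ℂ) (ψ₁ j') * ψ₁ j), if_pos (hSS hj)]
  exact conj_mul_self (ψ₁ j)

lemma forward_bound {d N : ℕ} (hd : 1 ≤ d) (ψ₁ ψ₂ : Fin d → ℂ)
    (hψ₂ : ∑ i, ‖ψ₂ i‖ ^ 2 = 1)
    (K : Fin N → Matrix (Fin d) (Fin d) ℂ)
    (hK1 : ∑ n, (K n)ᴴ * (K n) = 1)
    (hK2 : ∀ n, ∀ D : Matrix (Fin d) (Fin d) ℂ, D.IsDiag → ((K n) * D * (K n)ᴴ).IsDiag)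
    (hK3 : ∑ n, (K n) * (Matrix.vecMulVec ψ₁ (star ψ₁)) * (K n)ᴴ =
      Matrix.vecMulVec ψ₂ (star ψ₂)) (k : ℕ) :
    maxSum (fun i => ‖ψ₁ i‖ ^ 2) k ≤ maxSum (fun i => ‖ψ₂ i‖ ^ 2) k := by
  classical
  by_cases hkd : k ≤ d
  · -- find i₀ with ψ₂ i₀ ≠ 0
    have hi₀ : ∃ i₀, ψ₂ i₀ ≠ 0 := by
      by_contra h
      push_neg at h
      rw [Finset.sum_congr rfl (fun i _ => by rw [h i, norm_zero, zero_pow (two_ne_zero)])] at hψ₂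
      simp at hψ₂
    obtain ⟨i₀, hi₀⟩ := hi₀
    obtain ⟨c, hc, hc1⟩ := proportional ψ₁ ψ₂ hi₀ K hK3
    have hc1' : ∑ n, ‖c n‖ ^ 2 = 1 := by
      rw [Finset.sum_congr rfl (fun n _ => conj_mul_self (c n)), ← Complex.ofReal_sum] at hc1
      exact_mod_cast hc1
    obtain ⟨S₀, hS₀sub, hS₀⟩ := Finset.exists_subset_card_eq
      (s := (Finset.univ : Finset (Fin d))) (by simpa using hkd)
    have hq0 : (0:ℝ) ≤ maxSum (fun i => ‖ψ₂ i‖ ^ 2) k :=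
      le_trans (Finset.sum_nonneg (fun i _ => by positivity)) (le_maxSum S₀ hS₀)
    apply maxSum_le S₀ hS₀
    intro S hS
    set A := ∑ j ∈ S, ‖ψ₁ j‖ ^ 2 with hA
    have hA0 : 0 ≤ A := Finset.sum_nonneg (fun i _ => by positivity)
    set g : Fin N → Fin d → Fin d := fun n j =>
      if h : ∃ i, K n i j ≠ 0 then h.choose else ⟨0, hd⟩ with hg
    have hgspec : ∀ n j i, K n i j ≠ 0 → i = g n j := by
      intro n j i hi
      have hex : ∃ i, K n i j ≠ 0 := ⟨i, hi⟩
      have hch : K n (hex.choose) j ≠ 0 := hex.choose_spec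
      have := col_unique (K n) (hK2 n) j hi hch
      rw [this]
      simp only [hg, dif_pos hex]
    set T : Fin N → Finset (Fin d) := fun n => S.image (g n) with hT
    set a : Fin N → Fin d → ℂ := fun n i => ∑ j ∈ S, K n i j * ψ₁ j with ha
    have hsupp : ∀ n i, i ∉ T n → a n i = 0 := by
      intro n i hiT
      by_contra hne
      obtain ⟨j, hjS, hj⟩ := Finset.exists_ne_zero_of_sum_ne_zero hne
      exact hiT (Finset.mem_image.mpr ⟨j, hjS, (hgspec n j i (left_ne_zero_of_mul hj)).symm⟩)
    have I2 : ∑ n, ∑ i, (starRingEnd ℂ) (a n i) * a n i = ((A : ℝ) : ℂ) := by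
      rw [sum_inner_blocks ψ₁ K hK1 S S subset_rfl, ← Complex.ofReal_sum]
    have I1 : ∑ n, ∑ i, (starRingEnd ℂ) (c n * ψ₂ i) * a n i = ((A : ℝ) : ℂ) := by
      have h := sum_inner_blocks ψ₁ K hK1 Finset.univ S (Finset.subset_univ S)
      rw [← Complex.ofReal_sum] at h
      rw [← h]
      apply Finset.sum_congr rfl
      intro n _
      apply Finset.sum_congr rfl
      intro i _
      congr 1
      rw [← hc n i]
      rfl
    have I1' : ((A : ℝ) : ℂ) = ∑ n, ∑ i ∈ T n, (starRingEnd ℂ) (c n * ψ₂ i) * a n i := by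
      rw [← I1]
      apply Finset.sum_congr rfl
      intro n _
      refine (Finset.sum_subset (Finset.subset_univ (T n)) ?_).symm
      intro i _ hiT
      rw [hsupp n i hiT, mul_zero]
    -- norm bound
    have hAbound : A ≤ ∑ n, ∑ i ∈ T n, ‖c n * ψ₂ i‖ * ‖a n i‖ := by
      have h1 : A = ‖((A : ℝ) : ℂ)‖ := by
        rw [Complex.norm_real, Real.norm_eq_abs, abs_of_nonneg hA0]
      rw [h1, I1']
      calc ‖∑ n, ∑ i ∈ T n, (starRingEnd ℂ) (c n * ψ₂ i) * a n i‖
          ≤ ∑ n, ‖∑ i ∈ T n, (starRingEnd ℂ) (c n * ψ₂ i) * a n i‖ := norm_sum_le _ _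
        _ ≤ ∑ n, ∑ i ∈ T n, ‖(starRingEnd ℂ) (c n * ψ₂ i) * a n i‖ :=
            Finset.sum_le_sum (fun n _ => norm_sum_le _ _)
        _ = ∑ n, ∑ i ∈ T n, ‖c n * ψ₂ i‖ * ‖a n i‖ := by
            apply Finset.sum_congr rfl
            intro n _
            apply Finset.sum_congr rfl
            intro i _
            rw [norm_mul, RCLike.norm_conj]
    -- flatten to pairs
    set P : Finset (Fin N × Fin d) :=
      Finset.univ.filter (fun x : Fin N × Fin d => x.2 ∈ T x.1) with hP
    have hflat : ∀ (F : Fin N → Fin d → ℝ),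
        ∑ x ∈ P, F x.1 x.2 = ∑ n, ∑ i ∈ T n, F n i := by
      intro F
      rw [hP, Finset.sum_filter, Fintype.sum_prod_type]
      apply Finset.sum_congr rfl
      intro n _
      rw [← Finset.sum_filter]
      congr 1
      ext i
      simp
    have hCS := Finset.sum_mul_sq_le_sq_mul_sq P
      (fun x => ‖c x.1 * ψ₂ x.2‖) (fun x => ‖a x.1 x.2‖)
    rw [hflat (fun n i => ‖c n * ψ₂ i‖ * ‖a n i‖)] at hCS
    have hf2 : ∑ x ∈ P, ‖c x.1 * ψ₂ x.2‖ ^ 2 ≤ maxSum (fun i => ‖ψ₂ i‖ ^ 2) k := by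
      rw [hflat (fun n i => ‖c n * ψ₂ i‖ ^ 2)]
      have hTsum : ∀ n, ∑ i ∈ T n, ‖ψ₂ i‖ ^ 2 ≤ maxSum (fun i => ‖ψ₂ i‖ ^ 2) k := by
        intro n
        have hcardT : (T n).card ≤ k := le_trans (Finset.card_image_le) (le_of_eq hS)
        obtain ⟨T', hTT', _, hT'⟩ := Finset.exists_subsuperset_card_eq
          (Finset.subset_univ (T n)) hcardT (by simpa using hkd)
        calc ∑ i ∈ T n, ‖ψ₂ i‖ ^ 2 ≤ ∑ i ∈ T', ‖ψ₂ i‖ ^ 2 :=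
              Finset.sum_le_sum_of_subset_of_nonneg hTT' (fun i _ _ => by positivity)
          _ ≤ maxSum (fun i => ‖ψ₂ i‖ ^ 2) k := le_maxSum T' hT'
      calc ∑ n, ∑ i ∈ T n, ‖c n * ψ₂ i‖ ^ 2
          = ∑ n, ‖c n‖ ^ 2 * ∑ i ∈ T n, ‖ψ₂ i‖ ^ 2 := by
            apply Finset.sum_congr rfl
            intro n _
            rw [Finset.mul_sum]
            apply Finset.sum_congr rfl
            intro i _
            rw [norm_mul, mul_pow]
        _ ≤ ∑ n, ‖c n‖ ^ 2 * maxSum (fun i => ‖ψ₂ i‖ ^ 2) k :=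
            Finset.sum_le_sum (fun n _ =>
              mul_le_mul_of_nonneg_left (hTsum n) (by positivity))
        _ = maxSum (fun i => ‖ψ₂ i‖ ^ 2) k := by
            rw [← Finset.sum_mul, hc1', one_mul]
    have hg2 : ∑ x ∈ P, ‖a x.1 x.2‖ ^ 2 ≤ A := by
      rw [hflat (fun n i => ‖a n i‖ ^ 2)]
      have hfull : ∑ n, ∑ i, ‖a n i‖ ^ 2 = A := by
        have := I2
        rw [Finset.sum_congr rfl (fun n (_ : n ∈ Finset.univ) =>
          Finset.sum_congr rfl (fun i (_ : i ∈ Finset.univ) => conj_mul_self (a n i)))] at this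
        have h2 : ∑ n, ∑ i, (((‖a n i‖ ^ 2 : ℝ)) : ℂ)
            = ((∑ n, ∑ i, (‖a n i‖ ^ 2 : ℝ) : ℝ) : ℂ) := by
          push_cast
          rfl
        rw [h2] at this
        exact_mod_cast this
      rw [← hfull]
      apply Finset.sum_le_sum
      intro n _
      exact Finset.sum_le_sum_of_subset_of_nonneg (Finset.subset_univ (T n))
        (fun i _ _ => by positivity)
    -- combine
    by_cases hA : A = 0
    · rw [hA]; exact hq0
    · have hApos : 0 < A := lt_of_le_of_ne hA0 (Ne.symm hA)
      have h1 : A ^ 2 ≤ (∑ n, ∑ i ∈ T n, ‖c n * ψ₂ i‖ * ‖a n i‖) ^ 2 :=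
        pow_le_pow_left₀ hA0 hAbound 2
      have h2 : A ^ 2 ≤ maxSum (fun i => ‖ψ₂ i‖ ^ 2) k * A :=
        le_trans h1 (le_trans hCS (mul_le_mul hf2 hg2 (Finset.sum_nonneg
          (fun x _ => by positivity)) hq0))
      have : A * A ≤ maxSum (fun i => ‖ψ₂ i‖ ^ 2) k * A := by
        rw [← pow_two]; exact h2
      exact le_of_mul_le_mul_right this hApos
  · rw [maxSum_of_gt (by simpa using Nat.lt_of_not_le hkd),
      maxSum_of_gt (by simpa using Nat.lt_of_not_le hkd)]

lemma conj_outer {d : ℕ} (K : Matrix (Fin d) (Fin d) ℂ) (ψ : Fin d → ℂ) :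
    K * Matrix.vecMulVec ψ (star ψ) * Kᴴ
      = Matrix.vecMulVec (K.mulVec ψ) (star (K.mulVec ψ)) := by
  ext i i'
  simp only [Matrix.mul_apply, Matrix.vecMulVec_apply, Matrix.conjTranspose_apply,
    Matrix.mulVec, dotProduct, Pi.star_apply, star_sum, star_mul']
  rw [Finset.mul_sum]
  apply Finset.sum_congr rfl
  intro k _
  rw [Finset.sum_mul, Finset.sum_mul]
  apply Finset.sum_congr rfl
  intro j _
  ring

lemma construct_kraus {d N : ℕ} (ψ₁ ψ₂ : Fin d → ℂ)
    (t : Fin N → ℝ) (σ : Fin N → Equiv.Perm (Fin d))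
    (ht0 : ∀ m, 0 ≤ t m) (ht1 : ∑ m, t m = 1)
    (hp : ∀ j, ‖ψ₁ j‖ ^ 2 = ∑ m, t m * ‖ψ₂ (σ m j)‖ ^ 2) :
    ∃ K : Fin N → Matrix (Fin d) (Fin d) ℂ,
      (∑ n, (K n)ᴴ * (K n) = 1) ∧
      (∀ n, ∀ D : Matrix (Fin d) (Fin d) ℂ, D.IsDiag → ((K n) * D * (K n)ᴴ).IsDiag) ∧
      (∑ n, (K n) * (Matrix.vecMulVec ψ₁ (star ψ₁)) * (K n)ᴴ =
        Matrix.vecMulVec ψ₂ (star ψ₂)) := by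
  classical
  set a : Fin N → Fin d → ℂ := fun m j =>
    if ψ₁ j = 0 then ((Real.sqrt (t m) : ℝ) : ℂ)
    else ((Real.sqrt (t m) : ℝ) : ℂ) * ψ₂ (σ m j) / ψ₁ j with ha
  set K : Fin N → Matrix (Fin d) (Fin d) ℂ :=
    fun m => Matrix.of (fun i j => if i = σ m j then a m j else 0) with hK
  have hKapp : ∀ m i j, K m i j = if i = σ m j then a m j else 0 := fun m i j => rfl
  -- norm computation
  have hconj : ∀ m j, (starRingEnd ℂ) (a m j) * a m j
      = ((if ψ₁ j = 0 then t m else t m * ‖ψ₂ (σ m j)‖ ^ 2 / ‖ψ₁ j‖ ^ 2 : ℝ) : ℂ) := by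
    intro m j
    have hz : ∀ z : ℂ, (starRingEnd ℂ) z * z = ((‖z‖ ^ 2 : ℝ) : ℂ) := by
      intro z
      rw [mul_comm, Complex.mul_conj]
      norm_cast
      rw [Complex.normSq_eq_norm_sq]
    rw [hz]
    by_cases h : ψ₁ j = 0
    · simp only [ha, h, if_pos]
      simp [Real.sq_sqrt (ht0 m)]
    · simp only [ha, if_neg h]
      rw [norm_div, norm_mul, div_pow, mul_pow]
      rw [Complex.norm_real, Real.norm_eq_abs, abs_of_nonneg (Real.sqrt_nonneg _),
        Real.sq_sqrt (ht0 m)]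
  -- K_m ψ₁ = √t_m ψ₂
  have hKψ : ∀ m, (K m).mulVec ψ₁ = fun i => ((Real.sqrt (t m) : ℝ) : ℂ) * ψ₂ i := by
    intro m
    funext i
    have : (K m).mulVec ψ₁ i = ∑ j, (if (σ m).symm i = j then a m j * ψ₁ j else 0) := by
      simp only [Matrix.mulVec, dotProduct, hKapp]
      apply Finset.sum_congr rfl
      intro j _
      by_cases h : i = σ m j
      · rw [if_pos h, if_pos (by rw [Equiv.symm_apply_eq]; exact h)]
      · rw [if_neg h, if_neg (by rw [Equiv.symm_apply_eq]; exact h), zero_mul]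
    rw [this, Finset.sum_ite_eq Finset.univ ((σ m).symm i) (fun j => a m j * ψ₁ j),
      if_pos (Finset.mem_univ _)]
    set j0 := (σ m).symm i with hj0
    have hσj0 : σ m j0 = i := Equiv.apply_symm_apply _ _
    by_cases h : ψ₁ j0 = 0
    · have h0 : (0 : ℝ) = ∑ m', t m' * ‖ψ₂ (σ m' j0)‖ ^ 2 := by
        have := hp j0; rwa [h, norm_zero, zero_pow (by norm_num)] at this
      have hterm : t m * ‖ψ₂ (σ m j0)‖ ^ 2 = 0 := by
        have hnn : ∀ m' ∈ Finset.univ, 0 ≤ t m' * ‖ψ₂ (σ m' j0)‖ ^ 2 :=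
          fun m' _ => mul_nonneg (ht0 m') (by positivity)
        have := (Finset.sum_eq_zero_iff_of_nonneg hnn).mp h0.symm m (Finset.mem_univ m)
        exact this
      have : t m = 0 ∨ ψ₂ i = 0 := by
        rcases mul_eq_zero.mp hterm with h1 | h1
        · exact Or.inl h1
        · right
          rw [hσj0] at h1
          have : ‖ψ₂ i‖ = 0 := by
            have := pow_eq_zero_iff (n := 2) (by norm_num) |>.mp h1
            exact this
          exact norm_eq_zero.mp this
      rcases this with h1 | h1
      · simp [ha, h, h1]
      · simp [ha, h, h1]
    · simp only [ha, if_neg h]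
      rw [div_mul_cancel₀ _ h, hσj0]
  refine ⟨K, ?_, ?_, ?_⟩
  · -- completeness
    ext j k
    rw [Matrix.sum_apply]
    have hent : ∀ m, ((K m)ᴴ * K m) j k
        = if j = k then (starRingEnd ℂ) (a m j) * a m j else 0 := by
      intro m
      rw [Matrix.mul_apply]
      simp only [Matrix.conjTranspose_apply, hKapp]
      have hterm : ∀ i, (starRingEnd ℂ) (if i = σ m j then a m j else 0)
          * (if i = σ m k then a m k else 0)
          = if i = σ m j then (if i = σ m k then (starRingEnd ℂ) (a m j) * a m k else 0)
            else 0 := by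
        intro i; split_ifs <;> simp
      calc ∑ i, star ((if i = σ m j then a m j else 0)) * (if i = σ m k then a m k else 0)
          = ∑ i, if i = σ m j then (if i = σ m k then (starRingEnd ℂ) (a m j) * a m k else 0)
            else 0 := Finset.sum_congr rfl (fun i _ => hterm i)
        _ = if σ m j = σ m k then (starRingEnd ℂ) (a m j) * a m k else 0 := by
            rw [Finset.sum_ite_eq' Finset.univ (σ m j)
              (fun i => if i = σ m k then (starRingEnd ℂ) (a m j) * a m k else 0),
              if_pos (Finset.mem_univ _)]
        _ = if j = k then (starRingEnd ℂ) (a m j) * a m j else 0 := by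
            by_cases h : j = k
            · subst h; simp
            · rw [if_neg h, if_neg (fun hc => h ((σ m).injective hc))]
    rw [Finset.sum_congr rfl (fun m _ => hent m)]
    by_cases h : j = k
    · subst h
      simp only [eq_self_iff_true, if_true]
      rw [Finset.sum_congr rfl (fun m _ => hconj m j), Matrix.one_apply_eq]
      by_cases hj : ψ₁ j = 0
      · simp only [hj, if_pos]
        rw [← Complex.ofReal_sum, ht1, Complex.ofReal_one]
      · simp only [hj, if_neg, if_false]
        rw [← Complex.ofReal_sum, ← Finset.sum_div, ← hp j, div_self, Complex.ofReal_one]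
        intro hc
        exact hj (norm_eq_zero.mp (pow_eq_zero_iff (n := 2) (by norm_num) |>.mp hc))
    · simp [h, Matrix.one_apply, h]
  · -- incoherence
    intro m D hD
    intro i i' hne
    rw [Matrix.mul_apply]
    apply Finset.sum_eq_zero
    intro k _
    by_cases hik : i' = σ m k
    · rw [Matrix.mul_apply]
      have : ∑ j, K m i j * D j k = 0 := by
        apply Finset.sum_eq_zero
        intro j _
        by_cases hjk : j = k
        · subst hjk
          have : K m i j = 0 := by
            rw [hKapp, if_neg]
            intro hc; exact hne (hc.trans hik.symm)
          rw [this, zero_mul]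
        · rw [hD hjk, mul_zero]
      rw [this, zero_mul]
    · have : (K m)ᴴ k i' = 0 := by
        rw [Matrix.conjTranspose_apply, hKapp, if_neg hik, star_zero]
      rw [this, mul_zero]
  · -- transformation
    have : ∀ m, K m * Matrix.vecMulVec ψ₁ (star ψ₁) * (K m)ᴴ
        = Matrix.vecMulVec ((K m).mulVec ψ₁) (star ((K m).mulVec ψ₁)) :=
      fun m => conj_outer (K m) ψ₁
    rw [Finset.sum_congr rfl (fun m _ => this m)]
    ext i i'
    rw [Matrix.sum_apply]
    have : ∀ m, Matrix.vecMulVec ((K m).mulVec ψ₁) (star ((K m).mulVec ψ₁)) i i'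
        = ((t m : ℝ) : ℂ) * (ψ₂ i * (starRingEnd ℂ) (ψ₂ i')) := by
      intro m
      rw [Matrix.vecMulVec_apply, hKψ m]
      simp only [Pi.star_apply]
      rw [star_mul']
      have : (star (((Real.sqrt (t m) : ℝ) : ℂ))) = ((Real.sqrt (t m) : ℝ) : ℂ) := by
        exact Complex.conj_ofReal _
      rw [this]
      have hsq : ((Real.sqrt (t m) : ℝ) : ℂ) * ((Real.sqrt (t m) : ℝ) : ℂ) = ((t m : ℝ) : ℂ) := by
        rw [← Complex.ofReal_mul, Real.mul_self_sqrt (ht0 m)]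
      calc ((Real.sqrt (t m) : ℝ) : ℂ) * ψ₂ i * (((Real.sqrt (t m) : ℝ) : ℂ) * star (ψ₂ i'))
          = (((Real.sqrt (t m) : ℝ) : ℂ) * ((Real.sqrt (t m) : ℝ) : ℂ)) * (ψ₂ i * star (ψ₂ i')) := by ring
        _ = ((t m : ℝ) : ℂ) * (ψ₂ i * (starRingEnd ℂ) (ψ₂ i')) := by rw [hsq]; rfl
    rw [Finset.sum_congr rfl (fun m _ => this m), ← Finset.sum_mul]
    have : (∑ m, ((t m : ℝ) : ℂ)) = 1 := by
      rw [← Complex.ofReal_sum, ht1, Complex.ofReal_one]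
    rw [this, one_mul, Matrix.vecMulVec_apply]
    rfl

/-- Theorem of Du–Bai–Guo: a pure state `ψ₁` can be converted to `ψ₂` by an
incoherent operation iff the diagonal part of `ψ₁` is majorized by that of `ψ₂`. -/
theorem pure_state_incoherent_conversion_iff_majorization
    (d : ℕ) (hd : 1 ≤ d) (ψ₁ ψ₂ : Fin d → ℂ)
    (hψ₁ : ∑ i, ‖ψ₁ i‖ ^ 2 = 1) (hψ₂ : ∑ i, ‖ψ₂ i‖ ^ 2 = 1) :
    (∃ N : ℕ, 1 ≤ N ∧ ∃ K : Fin N → Matrix (Fin d) (Fin d) ℂ,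
      (∑ n, (K n)ᴴ * (K n) = 1) ∧
      (∀ n, ∀ D : Matrix (Fin d) (Fin d) ℂ, D.IsDiag → ((K n) * D * (K n)ᴴ).IsDiag) ∧
      (∑ n, (K n) * (Matrix.vecMulVec ψ₁ (star ψ₁)) * (K n)ᴴ =
        Matrix.vecMulVec ψ₂ (star ψ₂)))
    ↔ Maj (fun i => ‖ψ₁ i‖ ^ 2) (fun i => ‖ψ₂ i‖ ^ 2) := by
  constructor
  · rintro ⟨N, _, K, hK1, hK2, hK3⟩
    exact ⟨hψ₁.trans hψ₂.symm, fun k => forward_bound hd ψ₁ ψ₂ hψ₂ K hK1 hK2 hK3 k⟩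
  · rintro ⟨hsum, hle⟩
    obtain ⟨N, hN1, t, σ, ht0, ht1, hp⟩ :=
      exists_weights (fun i => ‖ψ₁ i‖ ^ 2) (fun i => ‖ψ₂ i‖ ^ 2) hsum hle
    obtain ⟨K, h1, h2, h3⟩ := construct_kraus ψ₁ ψ₂ t σ ht0 ht1 hp
    exact ⟨N, hN1, K, h1, h2, h3⟩
end

section
/- Let p, q, φ₁, φ₂ be probability vectors on Fin d and let ε > 0 satisfy (1/2) * ∑ i, |φ₁ i − p i| < ε and (1/2) * ∑ i, |φ₂ i − q i| < ε. Then: (a) for every α with 0 < α < 1, if S_α(p) ≥ S_0(φ₁) + (Real.log ε)/(1 − α) and S_0(q) ≤ S_0(φ₁) + (Real.log ε)/(1 − α), then S_α(q) ≤ S_α(p); and (b) for every α > 1, if S_α(q) ≤ S_∞(φ₂) − (Real.log ε)/(α − 1) and S_∞(φ₂) − (Real.log ε)/(α − 1) ≤ S_∞(p), then S_α(q) ≤ S_α(p). -/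
open Finset

/-- a probability vector: nonnegative entries summing to one -/
def IsProbVec {ι : Type*} [Fintype ι] (p : ι → ℝ) : Prop :=
  (∀ i, 0 ≤ p i) ∧ ∑ i, p i = 1

/-- Rényi entropy `S_α(x) = (1/(1-α)) log (∑ i, (x i)^α)` for `α ∉ {0,1}` -/
noncomputable def Sa {ι : Type*} [Fintype ι] (α : ℝ) (x : ι → ℝ) : ℝ :=
  (1 / (1 - α)) * Real.log (∑ i, (x i) ^ α)

/-- `S_0(x)`: log of the number of nonzero entries of `x` -/
noncomputable def S0 {ι : Type*} [Fintype ι] (x : ι → ℝ) : ℝ :=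
  Real.log ((Finset.univ.filter (fun i => x i ≠ 0)).card : ℝ)

/-- `S_∞(x) = - log (max_i x i)` -/
noncomputable def Sinf {ι : Type*} [Fintype ι] (x : ι → ℝ) : ℝ :=
  -Real.log (sSup (Set.range x))

lemma Sa_le_S0 {d : ℕ} (x : Fin d → ℝ) (hx : IsProbVec x) {α : ℝ}
    (hα0 : 0 < α) (hα1 : α < 1) : Sa α x ≤ S0 x := by
  obtain ⟨hx0, hx1⟩ := hx
  set T : Finset (Fin d) := Finset.univ.filter (fun i => x i ≠ 0) with hT
  have hTne : T.Nonempty := by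
    by_contra h
    rw [Finset.not_nonempty_iff_eq_empty] at h
    have : ∑ i, x i = 0 := by
      apply Finset.sum_eq_zero
      intro i _
      by_contra hne
      have : i ∈ T := by simp [hT, hne]
      simp [h] at this
    rw [hx1] at this; norm_num at this
  have hN : (0:ℝ) < (T.card : ℝ) := by
    exact_mod_cast Finset.card_pos.mpr hTne
  -- sums restricted to T
  have hsum_eq : ∑ i, x i ^ α = ∑ i ∈ T, x i ^ α := by
    symm
    apply Finset.sum_subset (Finset.subset_univ _)
    intro i _ hi
    have : x i = 0 := by simpa [hT] using hi
    rw [this, Real.zero_rpow hα0.ne']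
  have hsumT : ∑ i ∈ T, x i = 1 := by
    rw [← hx1]
    apply Finset.sum_subset (Finset.subset_univ _)
    intro i _ hi
    simpa [hT] using hi
  -- Jensen
  have hjensen := (Real.concaveOn_rpow hα0.le hα1.le).le_map_sum
    (w := fun _ => (T.card : ℝ)⁻¹) (p := x) (t := T)
    (fun i _ => by positivity)
    (by rw [Finset.sum_const, nsmul_eq_mul]; field_simp)
    (fun i _ => hx0 i)
  simp only [smul_eq_mul, ← Finset.mul_sum, hsumT, mul_one] at hjensen
  have hkey : ∑ i, x i ^ α ≤ (T.card : ℝ) ^ (1 - α) := by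
    rw [hsum_eq]
    have h2 : (T.card : ℝ) * ((T.card : ℝ)⁻¹) ^ α = (T.card : ℝ) ^ (1 - α) := by
      rw [Real.inv_rpow hN.le, Real.rpow_sub hN, Real.rpow_one, div_eq_mul_inv]
    calc ∑ i ∈ T, x i ^ α
        = (T.card : ℝ) * ((T.card : ℝ)⁻¹ * ∑ i ∈ T, x i ^ α) := by field_simp
      _ ≤ (T.card : ℝ) * ((T.card : ℝ)⁻¹) ^ α :=
          mul_le_mul_of_nonneg_left hjensen hN.le
      _ = (T.card : ℝ) ^ (1 - α) := h2
  have hpos : 0 < ∑ i, x i ^ α := by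
    obtain ⟨i₀, hi₀⟩ := hTne
    have hxi₀ : 0 < x i₀ := by
      have : x i₀ ≠ 0 := by simpa [hT] using hi₀
      exact lt_of_le_of_ne (hx0 i₀) (Ne.symm this)
    apply Finset.sum_pos' (fun i _ => Real.rpow_nonneg (hx0 i) α)
    exact ⟨i₀, Finset.mem_univ i₀, Real.rpow_pos_of_pos hxi₀ α⟩
  have hlog : Real.log (∑ i, x i ^ α) ≤ (1 - α) * Real.log (T.card : ℝ) := by
    calc Real.log (∑ i, x i ^ α) ≤ Real.log ((T.card : ℝ) ^ (1 - α)) :=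
          Real.log_le_log hpos hkey
      _ = (1 - α) * Real.log (T.card : ℝ) := Real.log_rpow hN _
  have h1α : 0 < 1 - α := by linarith
  unfold Sa S0
  rw [← hT]
  calc (1 / (1 - α)) * Real.log (∑ i, x i ^ α)
      ≤ (1 / (1 - α)) * ((1 - α) * Real.log (T.card : ℝ)) := by
        apply mul_le_mul_of_nonneg_left hlog (by positivity)
    _ = Real.log (T.card : ℝ) := by field_simp

lemma Sinf_le_Sa {d : ℕ} (x : Fin d → ℝ) (hx : IsProbVec x) {α : ℝ}
    (hα : 1 < α) : Sinf x ≤ Sa α x := by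
  obtain ⟨hx0, hx1⟩ := hx
  have hd : 0 < d := by
    by_contra h
    push_neg at h
    interval_cases d
    simp at hx1
  haveI : Nonempty (Fin d) := ⟨⟨0, hd⟩⟩
  set M : ℝ := sSup (Set.range x) with hM
  have hfin : (Set.range x).Finite := Set.finite_range x
  have hne : (Set.range x).Nonempty := Set.range_nonempty x
  have hMmem : M ∈ Set.range x := hne.csSup_mem hfin
  have hle : ∀ i, x i ≤ M := fun i =>
    le_csSup hfin.bddAbove (Set.mem_range_self i)
  have hi₀ : ∃ i, 0 < x i := by
    by_contra h
    push_neg at h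
    have : ∑ i, x i = 0 := Finset.sum_eq_zero fun i _ => le_antisymm (h i) (hx0 i)
    rw [hx1] at this; norm_num at this
  obtain ⟨i₀, hxi₀⟩ := hi₀
  have hMpos : 0 < M := lt_of_lt_of_le hxi₀ (hle i₀)
  have hαpos : (0:ℝ) < α := by linarith
  -- key: ∑ x_i^α ≤ M^(α-1)
  have hkey : ∑ i, x i ^ α ≤ M ^ (α - 1) := by
    calc ∑ i, x i ^ α ≤ ∑ i, M ^ (α - 1) * x i := by
          apply Finset.sum_le_sum
          intro i _
          rcases eq_or_lt_of_le (hx0 i) with h0 | h0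
          · rw [← h0, Real.zero_rpow hαpos.ne']
            positivity
          · have : x i ^ α = x i ^ (α - 1) * x i := by
              rw [← Real.rpow_add_one h0.ne' (α - 1)]; ring_nf
            rw [this]
            apply mul_le_mul_of_nonneg_right _ (hx0 i)
            exact Real.rpow_le_rpow h0.le (hle i) (by linarith)
      _ = M ^ (α - 1) := by rw [← Finset.mul_sum, hx1, mul_one]
  have hpos : 0 < ∑ i, x i ^ α := by
    apply Finset.sum_pos' (fun i _ => Real.rpow_nonneg (hx0 i) α)
    exact ⟨i₀, Finset.mem_univ i₀, Real.rpow_pos_of_pos hxi₀ α⟩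
  have hlog : Real.log (∑ i, x i ^ α) ≤ (α - 1) * Real.log M := by
    calc Real.log (∑ i, x i ^ α) ≤ Real.log (M ^ (α - 1)) :=
          Real.log_le_log hpos hkey
      _ = (α - 1) * Real.log M := Real.log_rpow hMpos _
  unfold Sinf Sa
  rw [← hM]
  have hα1 : 0 < α - 1 := by linarith
  rw [div_mul_eq_mul_div, one_mul, le_div_iff_of_neg (by linarith : 1 - α < 0)]
  nlinarith [hlog]

/-- Checking finitely many entropic conditions (via smoothed vectors `φ₁, φ₂`
in the ε-balls around `p` and `q`) suffices to establish all the Rényi-entropy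
inequalities for `α ∈ (0,1) ∪ (1,∞)`. -/
theorem finitely_many_conditions_suffice
    (d : ℕ) (p q φ₁ φ₂ : Fin d → ℝ)
    (hp : IsProbVec p) (hq : IsProbVec q)
    (hφ₁ : IsProbVec φ₁) (hφ₂ : IsProbVec φ₂)
    (ε : ℝ) (hε : 0 < ε)
    (hball₁ : (1 / 2) * ∑ i, |φ₁ i - p i| < ε)
    (hball₂ : (1 / 2) * ∑ i, |φ₂ i - q i| < ε) :
    (∀ α : ℝ, 0 < α → α < 1 →
      S0 φ₁ + Real.log ε / (1 - α) ≤ Sa α p →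
      S0 q ≤ S0 φ₁ + Real.log ε / (1 - α) →
      Sa α q ≤ Sa α p) ∧
    (∀ α : ℝ, 1 < α →
      Sa α q ≤ Sinf φ₂ - Real.log ε / (α - 1) →
      Sinf φ₂ - Real.log ε / (α - 1) ≤ Sinf p →
      Sa α q ≤ Sa α p) := by
  constructor
  · intro α hα0 hα1 h1 h2
    calc Sa α q ≤ S0 q := Sa_le_S0 q hq hα0 hα1
      _ ≤ S0 φ₁ + Real.log ε / (1 - α) := h2
      _ ≤ Sa α p := h1
  · intro α hα h1 h2
    calc Sa α q ≤ Sinf φ₂ - Real.log ε / (α - 1) := h1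
      _ ≤ Sinf p := h2
      _ ≤ Sa α p := Sinf_le_Sa p hp hα
end

section
/- Let p, q be probability vectors on Fin d whose entries are decreasingly ordered (p i ≥ p j and q i ≥ q j whenever i ≤ j), with q i > 0 for all i. Suppose that the optimal conversion probability P(p → q) := min_{0 ≤ l ≤ d−1} C_l(p)/C_l(q) equals C_{d−1}(p)/C_{d−1}(q) = p (d−1) / q (d−1). Then for every m ≥ 1 and every probability vector r on Fin m with r j > 0 for all j, one has min_{0 ≤ l ≤ dm−1} C_l(p ⊗ r)/C_l(q ⊗ r) ≤ p (d−1) / q (d−1); that is, the optimal conversion probability cannot be increased by any catalyst. -/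
open Finset

/-- tensor product of two vectors -/
def tensor {ι κ : Type*} (p : ι → ℝ) (r : κ → ℝ) : ι × κ → ℝ :=
  fun x => p x.1 * r x.2

/-- `C_l(x) = 1 - max_{|S| = l} ∑_{i ∈ S} x i`, the sum of the smallest
`n - l` entries of `x`. -/
noncomputable def Cl {ι : Type*} [Fintype ι] (x : ι → ℝ) (l : ℕ) : ℝ :=
  1 - maxSum x l

/-- optimal conversion probability: `min_{0 ≤ l ≤ n-1} C_l(p)/C_l(q)` -/
noncomputable def Pconv {ι : Type*} [Fintype ι] (n : ℕ) (p q : ι → ℝ) : ℝ :=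
  sInf {x : ℝ | ∃ l < n, x = Cl p l / Cl q l}

lemma maxSum_pred {ι : Type*} [Fintype ι] (x : ι → ℝ) (i₀ : ι)
    (hmin : ∀ j, x i₀ ≤ x j) :
    maxSum x (Fintype.card ι - 1) = ∑ i, x i - x i₀ := by
  classical
  apply IsGreatest.csSup_eq
  constructor
  · refine ⟨({i₀} : Finset ι)ᶜ, ?_, ?_⟩
    · simp [Finset.card_compl]
    · have h := Finset.sum_compl_add_sum ({i₀} : Finset ι) x
      simp only [Finset.sum_singleton] at h
      linarith
  · rintro y ⟨S, hS, rfl⟩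
    have hcard : (1:ℕ) ≤ Fintype.card ι := Fintype.card_pos_iff.mpr ⟨i₀⟩
    have hSc : Sᶜ.card = 1 := by
      rw [Finset.card_compl, hS]
      have : S.card ≤ Fintype.card ι := Finset.card_le_univ S
      omega
    obtain ⟨j, hj⟩ := Finset.card_eq_one.mp hSc
    have hsum := Finset.sum_compl_add_sum S x
    rw [hj, Finset.sum_singleton] at hsum
    have : ∑ i ∈ S, x i = ∑ i, x i - x j := by linarith
    rw [this]
    linarith [hmin j]

/-- If the optimal conversion probability is attained at the last level,
equalling the ratio of the smallest entries, then no catalyst can increase it. -/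
theorem no_catalyst_improvement_when_last_ratio
    (d : ℕ) (p q : Fin (d + 1) → ℝ)
    (hp : IsProbVec p) (hq : IsProbVec q)
    (hpdec : ∀ i j : Fin (d + 1), i ≤ j → p j ≤ p i)
    (hqdec : ∀ i j : Fin (d + 1), i ≤ j → q j ≤ q i)
    (hqpos : ∀ i, 0 < q i)
    (hmin : Pconv (d + 1) p q = p (Fin.last d) / q (Fin.last d)) :
    ∀ m : ℕ, 1 ≤ m → ∀ r : Fin m → ℝ, IsProbVec r → (∀ j, 0 < r j) →
      Pconv ((d + 1) * m) (tensor p r) (tensor q r) ≤ p (Fin.last d) / q (Fin.last d) := by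
  intro m hm r hr hrpos
  have hm0 : 0 < m := hm
  haveI : NeZero m := ⟨hm0.ne'⟩
  set N := (d + 1) * m with hN
  have hNpos : 0 < N := Nat.mul_pos (Nat.succ_pos d) hm0
  obtain ⟨j₀, _, hj₀⟩ := Finset.exists_min_image Finset.univ r ⟨0, Finset.mem_univ 0⟩
  have hmin_t : ∀ (P : Fin (d+1) → ℝ), (∀ i, 0 ≤ P i) →
      (∀ i j : Fin (d + 1), i ≤ j → P j ≤ P i) →
      ∀ z : Fin (d+1) × Fin m, tensor P r (Fin.last d, j₀) ≤ tensor P r z := by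
    intro P hP hPdec z
    have h1 : P (Fin.last d) ≤ P z.1 := hPdec z.1 (Fin.last d) (Fin.le_last z.1)
    have h2 : r j₀ ≤ r z.2 := hj₀ z.2 (Finset.mem_univ z.2)
    have : P (Fin.last d) * r j₀ ≤ P z.1 * r z.2 :=
      mul_le_mul h1 h2 (le_of_lt (hrpos j₀)) (hP z.1)
    simpa [tensor] using this
  have hcard : Fintype.card (Fin (d+1) × Fin m) = N := by simp [hN]
  have hsum_t : ∀ (P : Fin (d+1) → ℝ), ∑ i, P i = 1 →
      ∑ z : Fin (d+1) × Fin m, tensor P r z = 1 := by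
    intro P hP
    rw [Fintype.sum_prod_type]
    simp only [tensor]
    rw [← Finset.sum_mul_sum]
    rw [hP, hr.2, one_mul]
  have hClp : Cl (tensor p r) (N - 1) = p (Fin.last d) * r j₀ := by
    have := maxSum_pred (tensor p r) (Fin.last d, j₀) (hmin_t p hp.1 hpdec)
    rw [hcard] at this
    rw [Cl, this, hsum_t p hp.2]
    simp [tensor]
  have hClq : Cl (tensor q r) (N - 1) = q (Fin.last d) * r j₀ := by
    have := maxSum_pred (tensor q r) (Fin.last d, j₀)
      (hmin_t q (fun i => (hqpos i).le) hqdec)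
    rw [hcard] at this
    rw [Cl, this, hsum_t q hq.2]
    simp [tensor]
  set S := {x : ℝ | ∃ l < N, x = Cl (tensor p r) l / Cl (tensor q r) l} with hS
  have hfin : S.Finite := by
    have : S ⊆ (fun l => Cl (tensor p r) l / Cl (tensor q r) l) '' (Set.Iio N) := by
      rintro x ⟨l, hl, rfl⟩
      exact ⟨l, hl, rfl⟩
    exact Set.Finite.subset ((Set.finite_Iio N).image _) this
  have hmem : Cl (tensor p r) (N-1) / Cl (tensor q r) (N-1) ∈ S :=
    ⟨N - 1, by omega, rfl⟩
  have hle : Pconv N (tensor p r) (tensor q r) ≤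
      Cl (tensor p r) (N-1) / Cl (tensor q r) (N-1) :=
    csInf_le hfin.bddBelow hmem
  calc Pconv N (tensor p r) (tensor q r)
      ≤ Cl (tensor p r) (N-1) / Cl (tensor q r) (N-1) := hle
    _ = p (Fin.last d) / q (Fin.last d) := by
        rw [hClp, hClq, mul_div_mul_right _ _ (hrpos j₀).ne']
end

section
/- Let p, q be probability vectors on Fin 4 with p i > 0 for all i, with entries decreasingly ordered (p 0 ≥ p 1 ≥ p 2 ≥ p 3 and q 0 ≥ q 1 ≥ q 2 ≥ q 3), and with ¬(p ≺ q). Let a be a real number with 1/2 < a < 1 and let φ be the probability vector (a, 1−a) on Fin 2. Then p ⊗ φ ≺ q ⊗ φ if and only if all of the following hold: p 0 ≤ q 0; p 0 + p 1 > q 0 + q 1; p 0 + p 1 + p 2 ≤ q 0 + q 1 + q 2; (p 0 + p 1 − q 0)/(q 1 + q 2) ≤ a; 1 − (p 3 − q 3)/(q 2 − p 2) ≤ a; a ≤ q 0/(p 0 + p 1); a ≤ (q 0 − p 0)/(p 1 − q 1); and a ≤ 1 − q 3/(p 2 + p 3). -/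
open Finset

def psum (p : Fin 4 → ℝ) : ℕ → ℝ
  | 0 => 0
  | 1 => p 0
  | 2 => p 0 + p 1
  | 3 => p 0 + p 1 + p 2
  | _ => p 0 + p 1 + p 2 + p 3

lemma bddAbove_maxSumSet {ι : Type*} [Fintype ι] (v : ι → ℝ) (k : ℕ) :
    BddAbove {x : ℝ | ∃ S : Finset ι, S.card = k ∧ x = ∑ i ∈ S, v i} := by
  refine BddAbove.mono ?_ (Finset.bddAbove ((univ.powersetCard k).image fun S => ∑ i ∈ S, v i))
  rintro x ⟨S, hS, rfl⟩
  simp only [Finset.coe_image, Set.mem_image, Finset.mem_coe, mem_powersetCard]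
  exact ⟨S, ⟨subset_univ S, hS⟩, rfl⟩

lemma le_maxSum_s7 {ι : Type*} [Fintype ι] (v : ι → ℝ) (T : Finset ι) (k : ℕ) (hk : T.card = k)
    (x : ℝ) (hx : x = ∑ i ∈ T, v i) : x ≤ maxSum v k :=
  le_csSup (bddAbove_maxSumSet v k) ⟨T, hk, hx⟩

lemma maxSum_le_s7 {ι : Type*} [Fintype ι] (v : ι → ℝ) (k : ℕ) (M : ℝ)
    (hne : ∃ S : Finset ι, S.card = k)
    (h : ∀ S : Finset ι, S.card = k → ∑ i ∈ S, v i ≤ M) : maxSum v k ≤ M := by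
  obtain ⟨S₀, hS₀⟩ := hne
  refine csSup_le ⟨∑ i ∈ S₀, v i, S₀, hS₀, rfl⟩ ?_
  rintro x ⟨S, hS, rfl⟩; exact h S hS

lemma maxSum_of_large {ι : Type*} [Fintype ι] (v : ι → ℝ) (k : ℕ)
    (h : Fintype.card ι < k) : maxSum v k = 0 := by
  have : {x : ℝ | ∃ S : Finset ι, S.card = k ∧ x = ∑ i ∈ S, v i} = ∅ := by
    ext x; simp only [Set.mem_setOf_eq, Set.mem_empty_iff_false, iff_false, not_exists]
    rintro S ⟨hS, -⟩
    exact absurd (S.card_le_univ.trans_lt (by simpa using h)) (by omega)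
  rw [maxSum, this, Real.sSup_empty]

lemma sub4 (p : Fin 4 → ℝ) (h10 : p 1 ≤ p 0) (h21 : p 2 ≤ p 1) (h32 : p 3 ≤ p 2)
    (h3 : 0 ≤ p 3) (S : Finset (Fin 4)) : ∑ i ∈ S, p i ≤ psum p S.card := by
  have e1 : ∑ i ∈ S, p i = ∑ i ∈ univ, if i ∈ S then p i else 0 := by
    rw [Finset.sum_ite_mem, Finset.univ_inter]
  have e2 : S.card = ∑ i ∈ univ, if i ∈ S then 1 else 0 := by
    rw [Finset.sum_ite_mem, Finset.univ_inter, Finset.card_eq_sum_ones]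
  rw [e1, e2, Fin.sum_univ_four, Fin.sum_univ_four]
  by_cases h0 : (0 : Fin 4) ∈ S <;> by_cases h1 : (1 : Fin 4) ∈ S <;>
    by_cases h2 : (2 : Fin 4) ∈ S <;> by_cases h3' : (3 : Fin 4) ∈ S <;>
    simp only [h0, h1, h2, h3', if_true, if_false] <;> norm_num [psum] <;> linarith

lemma tensor_sum_decomp (p : Fin 4 → ℝ) (a : ℝ) (S : Finset (Fin 4 × Fin 2)) :
    ∑ x ∈ S, tensor p ![a, 1-a] x
      = a * ∑ i ∈ univ.filter (fun i => (i,0) ∈ S), p i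
        + (1-a) * ∑ i ∈ univ.filter (fun i => (i,1) ∈ S), p i := by
  have e1 : ∑ x ∈ S, tensor p ![a,1-a] x
      = ∑ x ∈ (univ : Finset (Fin 4 × Fin 2)), if x ∈ S then tensor p ![a,1-a] x else 0 := by
    rw [Finset.sum_ite_mem, Finset.univ_inter]
  rw [e1, Fintype.sum_prod_type]
  simp only [Fin.sum_univ_two, tensor, Matrix.cons_val_zero, Matrix.cons_val_one,
    Matrix.head_cons]
  rw [Finset.sum_add_distrib, Finset.mul_sum, Finset.mul_sum]
  congr 1
  · rw [Finset.sum_filter]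
    refine Finset.sum_congr rfl fun i _ => ?_
    split <;> ring
  · rw [Finset.sum_filter]
    refine Finset.sum_congr rfl fun i _ => ?_
    split <;> ring

lemma tensor_card_decomp (S : Finset (Fin 4 × Fin 2)) :
    S.card = (univ.filter (fun i : Fin 4 => (i,0) ∈ S)).card
      + (univ.filter (fun i : Fin 4 => (i,1) ∈ S)).card := by
  have e2 : S.card = ∑ x ∈ (univ : Finset (Fin 4 × Fin 2)), if x ∈ S then 1 else 0 := by
    rw [Finset.sum_ite_mem, Finset.univ_inter, Finset.card_eq_sum_ones]
  rw [e2, Fintype.sum_prod_type, Finset.card_filter, Finset.card_filter]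
  simp only [Fin.sum_univ_two]
  rw [Finset.sum_add_distrib]

lemma tensor_upper (p : Fin 4 → ℝ) (a : ℝ)
    (h10 : p 1 ≤ p 0) (h21 : p 2 ≤ p 1) (h32 : p 3 ≤ p 2) (h3 : 0 ≤ p 3)
    (ha₁ : 1/2 < a) (ha₂ : a < 1) (k : ℕ) (hk : k ≤ 8) (M : ℝ)
    (h : ∀ m n : ℕ, m + n = k → m ≤ 4 → n ≤ 4 → a * psum p m + (1-a) * psum p n ≤ M) :
    maxSum (tensor p ![a, 1-a]) k ≤ M := by
  apply maxSum_le_s7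
  · obtain ⟨T, -, hT⟩ := Finset.exists_subset_card_eq (s := (univ : Finset (Fin 4 × Fin 2)))
      (n := k) (by simp; omega)
    exact ⟨T, hT⟩
  · intro S hS
    rw [tensor_sum_decomp]
    set S0 := univ.filter (fun i : Fin 4 => (i,0) ∈ S) with hS0
    set S1 := univ.filter (fun i : Fin 4 => (i,1) ∈ S) with hS1
    have hm : S0.card ≤ 4 := le_trans (Finset.card_filter_le _ _) (by simp)
    have hn : S1.card ≤ 4 := le_trans (Finset.card_filter_le _ _) (by simp)
    have hmn : S0.card + S1.card = k := by rw [← tensor_card_decomp, hS]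
    have b0 := sub4 p h10 h21 h32 h3 S0
    have b1 := sub4 p h10 h21 h32 h3 S1
    have key := h S0.card S1.card hmn hm hn
    have m0 := mul_le_mul_of_nonneg_left b0 (by linarith : (0:ℝ) ≤ a)
    have m1 := mul_le_mul_of_nonneg_left b1 (by linarith : (0:ℝ) ≤ 1-a)
    linarith only [m0, m1, key]

lemma maxSum_fin4_le (p : Fin 4 → ℝ)
    (h10 : p 1 ≤ p 0) (h21 : p 2 ≤ p 1) (h32 : p 3 ≤ p 2) (h3 : 0 ≤ p 3)
    (k : ℕ) (hk : k ≤ 4) : maxSum p k ≤ psum p k := by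
  apply maxSum_le_s7
  · obtain ⟨T, -, hT⟩ := Finset.exists_subset_card_eq (s := (univ : Finset (Fin 4)))
      (n := k) (by simp; omega)
    exact ⟨T, hT⟩
  · intro S hS
    have := sub4 p h10 h21 h32 h3 S
    rwa [hS] at this

lemma psum_le_maxSum_fin4 (q : Fin 4 → ℝ) (k : ℕ) (hk : k ≤ 4) : psum q k ≤ maxSum q k := by
  interval_cases k
  · exact le_maxSum_s7 q ∅ 0 (by decide) _ (by simp [psum])
  · exact le_maxSum_s7 q {0} 1 (by decide) _ (by simp [psum])
  · exact le_maxSum_s7 q {0, 1} 2 (by decide) _ (by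
      rw [Finset.sum_insert (by decide), Finset.sum_singleton]; norm_num [psum]; try ring)
  · exact le_maxSum_s7 q {0, 1, 2} 3 (by decide) _ (by
      rw [Finset.sum_insert (by decide), Finset.sum_insert (by decide),
        Finset.sum_singleton]; norm_num [psum]; try ring)
  · exact le_maxSum_s7 q univ 4 (by decide) _ (by rw [Fin.sum_univ_four]; norm_num [psum]; try ring)

lemma maj_of_partials (p q : Fin 4 → ℝ)
    (h10 : p 1 ≤ p 0) (h21 : p 2 ≤ p 1) (h32 : p 3 ≤ p 2) (h3 : 0 ≤ p 3)
    (g10 : q 1 ≤ q 0) (g21 : q 2 ≤ q 1) (g32 : q 3 ≤ q 2) (g3 : 0 ≤ q 3)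
    (hsum : ∑ i, p i = ∑ i, q i)
    (h1 : p 0 ≤ q 0) (h2 : p 0 + p 1 ≤ q 0 + q 1) (h3' : p 0 + p 1 + p 2 ≤ q 0 + q 1 + q 2) :
    Maj p q := by
  have hsum4 : p 0 + p 1 + p 2 + p 3 = q 0 + q 1 + q 2 + q 3 := by
    rw [Fin.sum_univ_four, Fin.sum_univ_four] at hsum; exact hsum
  refine ⟨hsum, fun k => ?_⟩
  by_cases hk : k ≤ 4
  · calc maxSum p k ≤ psum p k := maxSum_fin4_le p h10 h21 h32 h3 k hk
      _ ≤ psum q k := by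
          interval_cases k <;> norm_num [psum] <;> linarith
      _ ≤ maxSum q k := psum_le_maxSum_fin4 q k hk
  · rw [maxSum_of_large _ _ (by simp; omega), maxSum_of_large _ _ (by simp; omega)]

lemma nec_c4_aux (a p0 p1 q0 q1 q2 q3 : ℝ)
    (ha₁ : 1/2 < a) (ha₂ : a < 1)
    (cQ3b : a + (1-a)*(p0+p1) ≤ q0+q1+q2)
    (c6' : a * (p0+p1) ≤ q0)
    (eaq : a*(q0+q1+q2+q3) = a)
    (h : p0 + p1 ≤ a*(q0+q1+q2+q3))
    (hcon : a * (q1+q2) < p0 + p1 - q0) : False := by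
  have A1 := mul_le_mul_of_nonneg_left cQ3b (by linarith : (0:ℝ) ≤ a)
  have A2 := mul_le_mul_of_nonneg_left c6' (by linarith : (0:ℝ) ≤ 1-a)
  have hy : (0:ℝ) ≤ 1 - 2*a + 2*a^2 := by nlinarith [sq_nonneg (1-2*a)]
  have D := mul_nonneg (by linarith only [h, eaq] : (0:ℝ) ≤ a - (p0 + p1)) hy
  have E : (0:ℝ) < a * ((1-a) * (2*a-1)) :=
    mul_pos (by linarith) (mul_pos (by linarith) (by linarith))
  linarith only [A1, A2, hcon, D, E]

lemma nec_c7_aux (a p0 p1 q0 q1 q2 : ℝ)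
    (ha₁ : 1/2 < a) (ha₂ : a < 1)
    (he2 : q2 ≤ q1)
    (c2 : q0 + q1 < p0 + p1)
    (c6' : a * (p0+p1) ≤ q0)
    (h : a*(p0+p1)+(1-a)*p0 ≤ a*(q0+q1+q2))
    (hcon : q0 - p0 < a * (p1 - q1)) : False := by
  have G1 := mul_le_mul_of_nonneg_left he2 (by linarith : (0:ℝ) ≤ a)
  have G2 := mul_lt_mul_of_pos_left c2 (by linarith : (0:ℝ) < a)
  linarith only [h, hcon, c6', G1, G2]

lemma nec_c5_aux (a p0 p1 p2 p3 q0 q1 q2 q3 : ℝ)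
    (ha₁ : 1/2 < a) (ha₂ : a < 1)
    (he2 : q2 ≤ q1)
    (c2 : q0 + q1 < p0 + p1)
    (hsum' : p0+p1+p2+p3 = q0+q1+q2+q3)
    (hqsum : q0+q1+q2+q3 = 1)
    (cQ3b : a + (1-a)*(p0+p1) ≤ q0+q1+q2)
    (eaq : a*(q0+q1+q2+q3) = a)
    (h : a*(p0+p1+p2)+(1-a)*(p0+p1) ≤ a*(q0+q1+q2+q3)+(1-a)*q0)
    (hcon : p3 - q3 < (1-a) * (q2 - p2)) : False := by
  have G3 := mul_le_mul_of_nonneg_left he2 (by linarith : (0:ℝ) ≤ 1-a)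
  have G4 := mul_lt_mul_of_pos_left c2 (by linarith : (0:ℝ) < 1-a)
  linarith only [h, hcon, hsum', cQ3b, eaq, G3, G4, hqsum]

set_option maxHeartbeats 4000000 in
/-- Characterization of the two-level catalysts `(a, 1-a)` for a conversion
between four-dimensional diagonal distributions. -/
theorem two_level_catalyst_characterization
    (p q : Fin 4 → ℝ) (hp : IsProbVec p) (hq : IsProbVec q)
    (hppos : ∀ i, 0 < p i)
    (hpdec : p 1 ≤ p 0 ∧ p 2 ≤ p 1 ∧ p 3 ≤ p 2)
    (hqdec : q 1 ≤ q 0 ∧ q 2 ≤ q 1 ∧ q 3 ≤ q 2)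
    (hnmaj : ¬ Maj p q)
    (a : ℝ) (ha₁ : 1 / 2 < a) (ha₂ : a < 1) :
    Maj (tensor p ![a, 1 - a]) (tensor q ![a, 1 - a]) ↔
      (p 0 ≤ q 0 ∧
       q 0 + q 1 < p 0 + p 1 ∧
       p 0 + p 1 + p 2 ≤ q 0 + q 1 + q 2 ∧
       (p 0 + p 1 - q 0) / (q 1 + q 2) ≤ a ∧
       1 - (p 3 - q 3) / (q 2 - p 2) ≤ a ∧
       a ≤ q 0 / (p 0 + p 1) ∧
       a ≤ (q 0 - p 0) / (p 1 - q 1) ∧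
       a ≤ 1 - q 3 / (p 2 + p 3)) := by
  obtain ⟨hd1, hd2, hd3⟩ := hpdec
  obtain ⟨he1, he2, he3⟩ := hqdec
  have pp0 := hppos 0; have pp1 := hppos 1; have pp2 := hppos 2; have pp3 := hppos 3
  have qq3 : 0 ≤ q 3 := hq.1 3
  have qq2 : 0 ≤ q 2 := le_trans qq3 he3
  have qq1 : 0 ≤ q 1 := le_trans qq2 he2
  have qq0 : 0 ≤ q 0 := le_trans qq1 he1
  have hpsum : p 0 + p 1 + p 2 + p 3 = 1 := by
    have := hp.2; rwa [Fin.sum_univ_four] at this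
  have hqsum : q 0 + q 1 + q 2 + q 3 = 1 := by
    have := hq.2; rwa [Fin.sum_univ_four] at this
  have ha0 : (0:ℝ) ≤ a := by linarith
  have ha0' : (0:ℝ) ≤ 1 - a := by linarith
  have ha21 : (0:ℝ) ≤ 2*a - 1 := by linarith
  have hP2 : (0:ℝ) < p 0 + p 1 := by linarith
  have hp23 : (0:ℝ) < p 2 + p 3 := by linarith
  constructor
  · -- necessity
    intro hM
    obtain ⟨hMsum, hMk⟩ := hM
    have hsum' : p 0+p 1+p 2+p 3 = q 0+q 1+q 2+q 3 := by rw [hpsum, hqsum]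
    have eap : a*(p 0+p 1+p 2+p 3) = a := by rw [hpsum]; ring
    have eaq : a*(q 0+q 1+q 2+q 3) = a := by rw [hqsum]; ring
    have e1ap : (1-a)*(p 0+p 1+p 2+p 3) = 1-a := by rw [hpsum]; ring
    have v0 : (0:ℝ) ≤ (2*a-1) * q 0 := mul_nonneg ha21 qq0
    have v1 : (0:ℝ) ≤ (2*a-1) * q 1 := mul_nonneg ha21 qq1
    have v2 : (0:ℝ) ≤ (2*a-1) * q 2 := mul_nonneg ha21 qq2
    have v3 : (0:ℝ) ≤ (2*a-1) * q 3 := mul_nonneg ha21 qq3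
    have v01 : (0:ℝ) ≤ (2*a-1) * (q 0+q 1) := mul_nonneg ha21 (by linarith)
    have v12 : (0:ℝ) ≤ (2*a-1) * (q 1+q 2) := mul_nonneg ha21 (by linarith)
    have v23 : (0:ℝ) ≤ (2*a-1) * (q 2+q 3) := mul_nonneg ha21 (by linarith)
    have v123 : (0:ℝ) ≤ (2*a-1) * (q 1+q 2+q 3) := mul_nonneg ha21 (by linarith)
    have v012 : (0:ℝ) ≤ (2*a-1) * (q 0+q 1+q 2) := mul_nonneg ha21 (by linarith)
    have vall : (0:ℝ) ≤ (2*a-1) * (q 0+q 1+q 2+q 3) := mul_nonneg ha21 (by linarith)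
    have HUq := tensor_upper q a he1 he2 he3 qq3 ha₁ ha₂
    -- q-side upper bounds
    have hub1 : maxSum (tensor q ![a,1-a]) 1 ≤ a * q 0 := by
      refine HUq 1 (by norm_num) _ ?_
      intro m n hmn hm hn
      interval_cases m <;> interval_cases n <;> try omega
      all_goals norm_num [psum]
      all_goals linarith only [v0]
    have hub2 : maxSum (tensor q ![a,1-a]) 2 ≤ max (q 0) (a*(q 0+q 1)) := by
      refine HUq 2 (by norm_num) _ ?_
      intro m n hmn hm hn
      interval_cases m <;> interval_cases n <;> try omega
      all_goals norm_num [psum]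
      all_goals first
        | (left; linarith only [v0, v01])
        | (right; linarith only [v0, v01])
    have hub3 : maxSum (tensor q ![a,1-a]) 3
        ≤ max (a*(q 0+q 1+q 2)) (a*(q 0+q 1)+(1-a)*q 0) := by
      refine HUq 3 (by norm_num) _ ?_
      intro m n hmn hm hn
      interval_cases m <;> interval_cases n <;> try omega
      all_goals norm_num [psum]
      all_goals first
        | (left; linarith only [v1, v012])
        | (right; linarith only [v1, v012])
    have hub4 : maxSum (tensor q ![a,1-a]) 4
        ≤ max (a*(q 0+q 1+q 2+q 3)) (max (a*(q 0+q 1+q 2)+(1-a)*q 0) (q 0+q 1)) := by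
      refine HUq 4 (by norm_num) _ ?_
      intro m n hmn hm hn
      interval_cases m <;> interval_cases n <;> try omega
      all_goals norm_num [psum]
      all_goals first
        | (left; linarith only [v12, vall])
        | (right; left; linarith only [v12, vall])
        | (right; right; linarith only [v12, vall])
    have hub5 : maxSum (tensor q ![a,1-a]) 5
        ≤ max (a*(q 0+q 1+q 2)+(1-a)*(q 0+q 1)) (a*(q 0+q 1+q 2+q 3)+(1-a)*q 0) := by
      refine HUq 5 (by norm_num) _ ?_
      intro m n hmn hm hn
      interval_cases m <;> interval_cases n <;> try omega
      all_goals norm_num [psum]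
      all_goals first
        | (left; linarith only [v2, v123])
        | (right; linarith only [v2, v123])
    have hub6 : maxSum (tensor q ![a,1-a]) 6
        ≤ max (q 0+q 1+q 2) (a*(q 0+q 1+q 2+q 3)+(1-a)*(q 0+q 1)) := by
      refine HUq 6 (by norm_num) _ ?_
      intro m n hmn hm hn
      interval_cases m <;> interval_cases n <;> try omega
      all_goals norm_num [psum]
      all_goals first
        | (left; linarith only [v23])
        | (right; linarith only [v23])
    have hub7 : maxSum (tensor q ![a,1-a]) 7
        ≤ a*(q 0+q 1+q 2+q 3)+(1-a)*(q 0+q 1+q 2) := by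
      refine HUq 7 (by norm_num) _ ?_
      intro m n hmn hm hn
      interval_cases m <;> interval_cases n <;> try omega
      all_goals norm_num [psum]
      all_goals linarith only [v3]
    -- p-side lower bounds
    have pl1 : a * p 0 ≤ maxSum (tensor p ![a,1-a]) 1 :=
      le_maxSum_s7 _ ({((0:Fin 4),(0:Fin 2))} : Finset (Fin 4 × Fin 2)) 1 (by decide) _ (by
        rw [Finset.sum_singleton]; simp [tensor]; try ring)
    have pl2 : a * (p 0+p 1) ≤ maxSum (tensor p ![a,1-a]) 2 :=
      le_maxSum_s7 _ ({((0:Fin 4),(0:Fin 2)),(1,0)} : Finset (Fin 4 × Fin 2)) 2 (by decide) _ (by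
        rw [Finset.sum_insert (by decide), Finset.sum_singleton]; simp [tensor]; try ring)
    have pl3 : a * (p 0+p 1) + (1-a) * p 0 ≤ maxSum (tensor p ![a,1-a]) 3 :=
      le_maxSum_s7 _ ({((0:Fin 4),(0:Fin 2)),(1,0),(0,1)} : Finset (Fin 4 × Fin 2)) 3
        (by decide) _ (by
        rw [Finset.sum_insert (by decide), Finset.sum_insert (by decide),
          Finset.sum_singleton]; simp [tensor]; try ring)
    have pl4 : p 0 + p 1 ≤ maxSum (tensor p ![a,1-a]) 4 :=
      le_maxSum_s7 _ ({((0:Fin 4),(0:Fin 2)),(1,0),(0,1),(1,1)} : Finset (Fin 4 × Fin 2)) 4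
        (by decide) _ (by
        rw [Finset.sum_insert (by decide), Finset.sum_insert (by decide),
          Finset.sum_insert (by decide), Finset.sum_singleton]; simp [tensor]; try ring)
    have pl5 : a * (p 0+p 1+p 2) + (1-a) * (p 0+p 1) ≤ maxSum (tensor p ![a,1-a]) 5 :=
      le_maxSum_s7 _ ({((0:Fin 4),(0:Fin 2)),(1,0),(2,0),(0,1),(1,1)} : Finset (Fin 4 × Fin 2)) 5
        (by decide) _ (by
        rw [Finset.sum_insert (by decide), Finset.sum_insert (by decide),
          Finset.sum_insert (by decide), Finset.sum_insert (by decide),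
          Finset.sum_singleton]; simp [tensor]; try ring)
    have pl6 : a * (p 0+p 1+p 2+p 3) + (1-a) * (p 0+p 1) ≤ maxSum (tensor p ![a,1-a]) 6 :=
      le_maxSum_s7 _ ({((0:Fin 4),(0:Fin 2)),(1,0),(2,0),(3,0),(0,1),(1,1)} :
          Finset (Fin 4 × Fin 2)) 6 (by decide) _ (by
        rw [Finset.sum_insert (by decide), Finset.sum_insert (by decide),
          Finset.sum_insert (by decide), Finset.sum_insert (by decide),
          Finset.sum_insert (by decide), Finset.sum_singleton]; simp [tensor]; try ring)
    have pl7 : a * (p 0+p 1+p 2+p 3) + (1-a) * (p 0+p 1+p 2) ≤ maxSum (tensor p ![a,1-a]) 7 :=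
      le_maxSum_s7 _ ({((0:Fin 4),(0:Fin 2)),(1,0),(2,0),(3,0),(0,1),(1,1),(2,1)} :
          Finset (Fin 4 × Fin 2)) 7 (by decide) _ (by
        rw [Finset.sum_insert (by decide), Finset.sum_insert (by decide),
          Finset.sum_insert (by decide), Finset.sum_insert (by decide),
          Finset.sum_insert (by decide), Finset.sum_insert (by decide),
          Finset.sum_singleton]; simp [tensor]; try ring)
    have F1 := (pl1.trans (hMk 1)).trans hub1
    have F2 := (pl2.trans (hMk 2)).trans hub2
    have F3 := (pl3.trans (hMk 3)).trans hub3
    have F4 := (pl4.trans (hMk 4)).trans hub4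
    have F5 := (pl5.trans (hMk 5)).trans hub5
    have F6 := (pl6.trans (hMk 6)).trans hub6
    have F7 := (pl7.trans (hMk 7)).trans hub7
    have hapos : (0:ℝ) < a := by linarith
    have ha'pos : (0:ℝ) < 1 - a := by linarith
    -- condition 1
    have c1 : p 0 ≤ q 0 := by
      by_contra h; push_neg at h
      have G := mul_lt_mul_of_pos_left h hapos
      linarith only [F1, G]
    -- condition 3
    have c3 : p 0 + p 1 + p 2 ≤ q 0 + q 1 + q 2 := by
      by_contra h; push_neg at h
      have G := mul_lt_mul_of_pos_left h ha'pos
      linarith only [F7, eap, eaq, G]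
    -- condition 2
    have c2 : q 0 + q 1 < p 0 + p 1 := by
      by_contra hc2; push_neg at hc2
      exact hnmaj (maj_of_partials p q hd1 hd2 hd3 (le_of_lt pp3) he1 he2 he3 qq3
        (by rw [hp.2, hq.2]) c1 hc2 c3)
    -- positivity of denominators
    have hq12 : (0:ℝ) < q 1 + q 2 := by
      rcases lt_or_ge 0 (q 1 + q 2) with h | h
      · exact h
      · exfalso
        have e1 : q 1 = 0 := by linarith
        have e2 : q 2 = 0 := by linarith
        have e3 : q 3 = 0 := by linarith
        linarith
    have hq2p2 : (0:ℝ) < q 2 - p 2 := by linarith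
    have hp1q1 : (0:ℝ) < p 1 - q 1 := by linarith
    -- condition 6
    have c6' : a * (p 0 + p 1) ≤ q 0 := by
      rcases le_max_iff.mp F2 with h | h
      · exact h
      · exfalso
        have G := mul_lt_mul_of_pos_left c2 hapos
        linarith only [h, G]
    -- condition 8
    have c8' : q 3 ≤ (1-a) * (p 2 + p 3) := by
      rcases le_max_iff.mp F6 with h | h
      · linarith only [h, hqsum, eap, e1ap]
      · exfalso
        have G := mul_lt_mul_of_pos_left c2 ha'pos
        linarith only [h, eap, eaq, G]
    have cQ3b : a + (1-a)*(p 0+p 1) ≤ q 0+q 1+q 2 := by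
      linarith only [c8', hqsum, hpsum, eap, e1ap]
    -- condition 4
    have c4' : p 0 + p 1 - q 0 ≤ a * (q 1 + q 2) := by
      by_contra hcon; push_neg at hcon
      rcases le_max_iff.mp F4 with h | h
      · exact nec_c4_aux a (p 0) (p 1) (q 0) (q 1) (q 2) (q 3)
          ha₁ ha₂ cQ3b c6' eaq h hcon
      · rcases le_max_iff.mp h with h2 | h2
        · linarith only [hcon, h2]
        · linarith only [c2, h2]
    -- condition 7
    have c7' : a * (p 1 - q 1) ≤ q 0 - p 0 := by
      by_contra hcon; push_neg at hcon
      rcases le_max_iff.mp F3 with h | h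
      · exact nec_c7_aux a (p 0) (p 1) (q 0) (q 1) (q 2)
          ha₁ ha₂ he2 c2 c6' h hcon
      · linarith only [h, hcon]
    -- condition 5
    have c5' : (1-a) * (q 2 - p 2) ≤ p 3 - q 3 := by
      by_contra hcon; push_neg at hcon
      rcases le_max_iff.mp F5 with h | h
      · linarith only [h, hcon, hsum']
      · exact nec_c5_aux a (p 0) (p 1) (p 2) (p 3)
          (q 0) (q 1) (q 2) (q 3) ha₁ ha₂ he2 c2 hsum' hqsum cQ3b eaq h hcon
    exact ⟨c1, c2, c3,
      (div_le_iff₀ hq12).mpr c4',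
      by have := (le_div_iff₀ hq2p2).mpr c5'; linarith,
      (le_div_iff₀ hP2).mpr c6',
      (le_div_iff₀ hp1q1).mpr c7',
      by have := (div_le_iff₀ hp23).mpr c8'; linarith⟩
  · -- sufficiency
    rintro ⟨c1, c2, c3, c4, c5, c6, c7, c8⟩
    have hq12 : (0:ℝ) < q 1 + q 2 := by
      rcases lt_or_ge 0 (q 1 + q 2) with h | h
      · exact h
      · exfalso
        have e1 : q 1 = 0 := by linarith
        have e2 : q 2 = 0 := by linarith
        have e3 : q 3 = 0 := by linarith
        linarith
    have hq2p2 : (0:ℝ) < q 2 - p 2 := by linarith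
    have hp1q1 : (0:ℝ) < p 1 - q 1 := by linarith
    have c4' : p 0 + p 1 - q 0 ≤ a * (q 1 + q 2) := (div_le_iff₀ hq12).mp c4
    have c5' : (1-a) * (q 2 - p 2) ≤ p 3 - q 3 := by
      have h2 : 1 - a ≤ (p 3 - q 3)/(q 2 - p 2) := by linarith
      have := (le_div_iff₀ hq2p2).mp h2; linarith
    have c6' : a * (p 0 + p 1) ≤ q 0 := (le_div_iff₀ hP2).mp c6
    have c7' : a * (p 1 - q 1) ≤ q 0 - p 0 := (le_div_iff₀ hp1q1).mp c7
    have c8' : q 3 ≤ (1-a) * (p 2 + p 3) := by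
      have h2 : q 3/(p 2 + p 3) ≤ 1 - a := by linarith
      have := (div_le_iff₀ hp23).mp h2; linarith
    -- product facts for linarith
    have t1 : a * p 0 ≤ a * q 0 := mul_le_mul_of_nonneg_left c1 ha0
    have t1' : (1-a) * p 0 ≤ (1-a) * q 0 := mul_le_mul_of_nonneg_left c1 ha0'
    have t3 : a * (p 0 + p 1 + p 2) ≤ a * (q 0 + q 1 + q 2) := mul_le_mul_of_nonneg_left c3 ha0
    have t3' : (1-a) * (p 0 + p 1 + p 2) ≤ (1-a) * (q 0 + q 1 + q 2) := mul_le_mul_of_nonneg_left c3 ha0'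
    have w0 : (0:ℝ) ≤ (2*a-1) * p 0 := mul_nonneg ha21 (by linarith)
    have w1 : (0:ℝ) ≤ (2*a-1) * p 1 := mul_nonneg ha21 (by linarith)
    have w2 : (0:ℝ) ≤ (2*a-1) * (p 1 + p 2) := mul_nonneg ha21 (by linarith)
    have w3 : (0:ℝ) ≤ (2*a-1) * (p 1 + p 2 + p 3) := mul_nonneg ha21 (by linarith)
    have w4 : (0:ℝ) ≤ (2*a-1) * p 2 := mul_nonneg ha21 (by linarith)
    have w5 : (0:ℝ) ≤ (2*a-1) * p 3 := mul_nonneg ha21 (by linarith)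
    have w6 : (0:ℝ) ≤ (2*a-1) * (p 2 + p 3) := mul_nonneg ha21 (by linarith)
    have w7 : (0:ℝ) ≤ (2*a-1) * (p 0 + p 1) := mul_nonneg ha21 (by linarith)
    have w8 : (0:ℝ) ≤ (2*a-1) * (p 0 + p 1 + p 2) := mul_nonneg ha21 (by linarith)
    have w9 : (0:ℝ) ≤ (2*a-1) * q 0 := mul_nonneg ha21 qq0
    have w10 : (0:ℝ) ≤ (2*a-1) * (q 0 + q 1 + q 2 + q 3) := mul_nonneg ha21 (by linarith)
    have w11 : (0:ℝ) ≤ (2*a-1) * (p 0 + p 1 + p 2 + p 3) := mul_nonneg ha21 (by linarith)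
    have ea : a * (p 0 + p 1 + p 2 + p 3) = a * (q 0 + q 1 + q 2 + q 3) := by
      rw [hpsum, hqsum]
    have e1a : (1-a) * (p 0 + p 1 + p 2 + p 3) = (1-a) * (q 0 + q 1 + q 2 + q 3) := by
      rw [hpsum, hqsum]
    constructor
    · rw [Fintype.sum_prod_type, Fintype.sum_prod_type]
      simp only [Fin.sum_univ_four, Fin.sum_univ_two, tensor, Matrix.cons_val_zero,
        Matrix.cons_val_one, Matrix.head_cons]
      have hsq : p 0 + p 1 + p 2 + p 3 = q 0 + q 1 + q 2 + q 3 := by rw [hpsum, hqsum]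
      linear_combination hsq
    · intro k
      by_cases hk8 : k ≤ 8
      swap
      · rw [maxSum_of_large _ _ (by simp; omega), maxSum_of_large _ _ (by simp; omega)]
      have HU := tensor_upper p a hd1 hd2 hd3 (le_of_lt pp3) ha₁ ha₂
      interval_cases k
      · -- k = 0
        have lb : (0:ℝ) ≤ maxSum (tensor q ![a,1-a]) 0 :=
          le_maxSum_s7 _ (∅ : Finset (Fin 4 × Fin 2)) 0 (by decide) _ (by simp)
        refine le_trans (HU 0 (by norm_num) _ ?_) lb
        intro m n hmn hm hn
        interval_cases m <;> interval_cases n <;> try omega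
        all_goals norm_num [psum]
      · -- k = 1
        have lb : a * q 0 ≤ maxSum (tensor q ![a,1-a]) 1 :=
          le_maxSum_s7 _ ({((0:Fin 4),(0:Fin 2))} : Finset (Fin 4 × Fin 2)) 1 (by decide) _ (by
            rw [Finset.sum_singleton]; simp [tensor]; try ring)
        refine le_trans (HU 1 (by norm_num) _ ?_) lb
        intro m n hmn hm hn
        interval_cases m <;> interval_cases n <;> try omega
        all_goals norm_num [psum]
        all_goals linarith only [lb, t1, t1', w9]
      · -- k = 2
        have lb : q 0 ≤ maxSum (tensor q ![a,1-a]) 2 :=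
          le_maxSum_s7 _ ({((0:Fin 4),(0:Fin 2)),(0,1)} : Finset (Fin 4 × Fin 2)) 2 (by decide) _ (by
            rw [Finset.sum_insert (by decide), Finset.sum_singleton]; simp [tensor]; try ring)
        refine le_trans (HU 2 (by norm_num) _ ?_) lb
        intro m n hmn hm hn
        interval_cases m <;> interval_cases n <;> try omega
        all_goals norm_num [psum]
        all_goals linarith only [lb, c1, c6', w7]
      · -- k = 3
        have lbA : a * (q 0 + q 1 + q 2) ≤ maxSum (tensor q ![a,1-a]) 3 :=
          le_maxSum_s7 _ ({((0:Fin 4),(0:Fin 2)),(1,0),(2,0)} : Finset (Fin 4 × Fin 2)) 3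
            (by decide) _ (by
            rw [Finset.sum_insert (by decide), Finset.sum_insert (by decide),
              Finset.sum_singleton]; simp [tensor]; try ring)
        have lbB : a * (q 0 + q 1) + (1-a) * q 0 ≤ maxSum (tensor q ![a,1-a]) 3 :=
          le_maxSum_s7 _ ({((0:Fin 4),(0:Fin 2)),(1,0),(0,1)} : Finset (Fin 4 × Fin 2)) 3
            (by decide) _ (by
            rw [Finset.sum_insert (by decide), Finset.sum_insert (by decide),
              Finset.sum_singleton]; simp [tensor]; try ring)
        refine HU 3 (by norm_num) _ ?_
        intro m n hmn hm hn
        interval_cases m <;> interval_cases n <;> try omega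
        all_goals norm_num [psum]
        all_goals linarith only [lbA, lbB, t3, c7', w1, w8]
      · -- k = 4
        have lbA : a * (q 0 + q 1 + q 2) + (1-a) * q 0 ≤ maxSum (tensor q ![a,1-a]) 4 :=
          le_maxSum_s7 _ ({((0:Fin 4),(0:Fin 2)),(1,0),(2,0),(0,1)} : Finset (Fin 4 × Fin 2)) 4
            (by decide) _ (by
            rw [Finset.sum_insert (by decide), Finset.sum_insert (by decide),
              Finset.sum_insert (by decide), Finset.sum_singleton]; simp [tensor]; try ring)
        have lbB : a * (q 0 + q 1 + q 2 + q 3) ≤ maxSum (tensor q ![a,1-a]) 4 :=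
          le_maxSum_s7 _ ({((0:Fin 4),(0:Fin 2)),(1,0),(2,0),(3,0)} : Finset (Fin 4 × Fin 2)) 4
            (by decide) _ (by
            rw [Finset.sum_insert (by decide), Finset.sum_insert (by decide),
              Finset.sum_insert (by decide), Finset.sum_singleton]; simp [tensor]; try ring)
        refine HU 4 (by norm_num) _ ?_
        intro m n hmn hm hn
        interval_cases m <;> interval_cases n <;> try omega
        all_goals norm_num [psum]
        all_goals linarith only [lbA, lbB, t3, t1', c4', w2, w10, ea, e1a]
      · -- k = 5
        have lbA : a * (q 0 + q 1 + q 2) + (1-a) * (q 0 + q 1) ≤ maxSum (tensor q ![a,1-a]) 5 :=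
          le_maxSum_s7 _ ({((0:Fin 4),(0:Fin 2)),(1,0),(2,0),(0,1),(1,1)} : Finset (Fin 4 × Fin 2)) 5
            (by decide) _ (by
            rw [Finset.sum_insert (by decide), Finset.sum_insert (by decide),
              Finset.sum_insert (by decide), Finset.sum_insert (by decide),
              Finset.sum_singleton]; simp [tensor]; try ring)
        have lbB : a * (q 0 + q 1 + q 2 + q 3) + (1-a) * q 0 ≤ maxSum (tensor q ![a,1-a]) 5 :=
          le_maxSum_s7 _ ({((0:Fin 4),(0:Fin 2)),(1,0),(2,0),(3,0),(0,1)} : Finset (Fin 4 × Fin 2)) 5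
            (by decide) _ (by
            rw [Finset.sum_insert (by decide), Finset.sum_insert (by decide),
              Finset.sum_insert (by decide), Finset.sum_insert (by decide),
              Finset.sum_singleton]; simp [tensor]; try ring)
        refine HU 5 (by norm_num) _ ?_
        intro m n hmn hm hn
        interval_cases m <;> interval_cases n <;> try omega
        all_goals norm_num [psum]
        all_goals linarith only [lbA, lbB, c5', t1', w4, w3, ea, e1a, hpsum, hqsum]
      · -- k = 6
        have lb : q 0 + q 1 + q 2 ≤ maxSum (tensor q ![a,1-a]) 6 :=
          le_maxSum_s7 _ ({((0:Fin 4),(0:Fin 2)),(1,0),(2,0),(0,1),(1,1),(2,1)} :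
              Finset (Fin 4 × Fin 2)) 6 (by decide) _ (by
            rw [Finset.sum_insert (by decide), Finset.sum_insert (by decide),
              Finset.sum_insert (by decide), Finset.sum_insert (by decide),
              Finset.sum_insert (by decide), Finset.sum_singleton]; simp [tensor]; try ring)
        refine le_trans (HU 6 (by norm_num) _ ?_) lb
        intro m n hmn hm hn
        interval_cases m <;> interval_cases n <;> try omega
        all_goals norm_num [psum]
        all_goals linarith only [lb, c3, c8', w6, hpsum, hqsum]
      · -- k = 7
        have lb : a * (q 0+q 1+q 2+q 3) + (1-a) * (q 0+q 1+q 2) ≤ maxSum (tensor q ![a,1-a]) 7 :=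
          le_maxSum_s7 _ ({((0:Fin 4),(0:Fin 2)),(1,0),(2,0),(3,0),(0,1),(1,1),(2,1)} :
              Finset (Fin 4 × Fin 2)) 7 (by decide) _ (by
            rw [Finset.sum_insert (by decide), Finset.sum_insert (by decide),
              Finset.sum_insert (by decide), Finset.sum_insert (by decide),
              Finset.sum_insert (by decide), Finset.sum_insert (by decide),
              Finset.sum_singleton]; simp [tensor]; try ring)
        refine le_trans (HU 7 (by norm_num) _ ?_) lb
        intro m n hmn hm hn
        interval_cases m <;> interval_cases n <;> try omega
        all_goals norm_num [psum]
        all_goals linarith only [lb, t3', w5, ea, e1a]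
      · -- k = 8
        have lb : q 0+q 1+q 2+q 3 ≤ maxSum (tensor q ![a,1-a]) 8 :=
          le_maxSum_s7 _ (univ : Finset (Fin 4 × Fin 2)) 8 (by decide) _ (by
            rw [Fintype.sum_prod_type]
            simp [tensor, Fin.sum_univ_four, Fin.sum_univ_two]; try ring)
        refine le_trans (HU 8 (by norm_num) _ ?_) lb
        intro m n hmn hm hn
        interval_cases m <;> interval_cases n <;> try omega
        all_goals norm_num [psum]
        all_goals linarith only [lb, hpsum, hqsum]
end

section
/- Let a : ℂ be 1/(2 * Real.sqrt 2), and define 3×3 complex matrices K₁, …, K₈ as follows: K₁ = K₂ has first row (a, a, a) and all other entries 0; K₃ = K₄ has first row (−a, a, a) and all other entries 0; K₅ = K₆ = K₇ = K₈ has first row (a, 0, 0), second row (0, a, −a), and third row 0. Let ψ : Fin 3 → ℂ be the constant function ψ i = 1/Real.sqrt 3 and let P = Matrix.vecMulVec ψ (star ψ) (so every entry of P equals 1/3). Then: (i) ∑_{n=1}^{8} Kₙᴴ * Kₙ = 1; (ii) for every n ∈ {1,…,8} and every diagonal matrix D : Matrix (Fin 3) (Fin 3) ℂ, the matrix Kₙ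 * D * Kₙᴴ is diagonal; (iii) ∑_{n=1}^{8} Kₙ * P * Kₙᴴ = Matrix.stdBasisMatrix 0 0 1 (the matrix with (0,0) entry 1 and all other entries 0). -/
open Finset Matrix

set_option linter.unnecessarySeqFocus false

/-- the common nonzero entry `1/(2√2)` -/
noncomputable def aK : ℂ := 1 / (2 * (Real.sqrt 2 : ℂ))

/-- the eight Kraus operators of the counterexample incoherent channel -/
noncomputable def Kop : Fin 8 → Matrix (Fin 3) (Fin 3) ℂ :=
  ![!![aK, aK, aK; 0, 0, 0; 0, 0, 0],
    !![aK, aK, aK; 0, 0, 0; 0, 0, 0],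
    !![-aK, aK, aK; 0, 0, 0; 0, 0, 0],
    !![-aK, aK, aK; 0, 0, 0; 0, 0, 0],
    !![aK, 0, 0; 0, aK, -aK; 0, 0, 0],
    !![aK, 0, 0; 0, aK, -aK; 0, 0, 0],
    !![aK, 0, 0; 0, aK, -aK; 0, 0, 0],
    !![aK, 0, 0; 0, aK, -aK; 0, 0, 0]]

/-- the maximally coherent qutrit state -/
noncomputable def ψMC : Fin 3 → ℂ := fun _ => 1 / (Real.sqrt 3 : ℂ)

lemma aK_star : (starRingEnd ℂ) aK = aK := by
  simp [aK, map_ofNat]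

lemma aK_sq : aK * aK = 1/8 := by
  have h : (Real.sqrt 2 : ℂ) * (Real.sqrt 2 : ℂ) = 2 := by
    rw [← Complex.ofReal_mul, Real.mul_self_sqrt (by norm_num)]; norm_num
  rw [aK, div_mul_div_comm]
  rw [show (2 * (Real.sqrt 2:ℂ)) * (2 * Real.sqrt 2) = 4 * ((Real.sqrt 2:ℂ) * Real.sqrt 2) by ring, h]
  norm_num

lemma ψ_mul (i j : Fin 3) : ψMC i * (starRingEnd ℂ) (ψMC j) = 1/3 := by
  have h3 : (Real.sqrt 3 : ℂ) * (Real.sqrt 3 : ℂ) = 3 := by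
    rw [← Complex.ofReal_mul, Real.mul_self_sqrt (by norm_num)]; norm_num
  simp only [ψMC, one_div, map_inv₀, Complex.conj_ofReal]
  rw [← mul_inv, h3]

/-- the constant `1/3` matrix -/
noncomputable def Qc : Matrix (Fin 3) (Fin 3) ℂ := !![(1/3:ℂ), 1/3, 1/3; 1/3, 1/3, 1/3; 1/3, 1/3, 1/3]

lemma hPQ : Matrix.vecMulVec ψMC (star ψMC) = Qc := by
  ext i j
  fin_cases i <;> fin_cases j <;> simp [Qc, vecMulVec_apply, ψ_mul, Matrix.vecHead, Matrix.vecTail]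

lemma kq1 : (!![aK, aK, aK; 0, 0, 0; 0, 0, 0] : Matrix (Fin 3) (Fin 3) ℂ) * Qc *
    (!![aK, aK, aK; 0, 0, 0; 0, 0, 0] : Matrix (Fin 3) (Fin 3) ℂ)ᴴ = !![(3/8:ℂ),0,0;0,0,0;0,0,0] := by
  ext i j
  fin_cases i <;> fin_cases j <;>
    simp [Qc, mul_apply, Fin.sum_univ_three, conjTranspose_apply, aK_star,
      Matrix.vecHead, Matrix.vecTail] <;>
    try (ring_nf; norm_num [sq, aK_sq])

lemma kq2 : (!![-aK, aK, aK; 0, 0, 0; 0, 0, 0] : Matrix (Fin 3) (Fin 3) ℂ) * Qc *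
    (!![-aK, aK, aK; 0, 0, 0; 0, 0, 0] : Matrix (Fin 3) (Fin 3) ℂ)ᴴ = !![(1/24:ℂ),0,0;0,0,0;0,0,0] := by
  ext i j
  fin_cases i <;> fin_cases j <;>
    simp [Qc, mul_apply, Fin.sum_univ_three, conjTranspose_apply, aK_star,
      Matrix.vecHead, Matrix.vecTail] <;>
    try (ring_nf; norm_num [sq, aK_sq])

lemma kq3 : (!![aK, 0, 0; 0, aK, -aK; 0, 0, 0] : Matrix (Fin 3) (Fin 3) ℂ) * Qc *
    (!![aK, 0, 0; 0, aK, -aK; 0, 0, 0] : Matrix (Fin 3) (Fin 3) ℂ)ᴴ = !![(1/24:ℂ),0,0;0,0,0;0,0,0] := by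
  ext i j
  fin_cases i <;> fin_cases j <;>
    simp [Qc, mul_apply, Fin.sum_univ_three, conjTranspose_apply, aK_star,
      Matrix.vecHead, Matrix.vecTail] <;>
    try (ring_nf; norm_num [sq, aK_sq])

lemma dq1 (d : Fin 3 → ℂ) :
    ((!![aK, aK, aK; 0, 0, 0; 0, 0, 0] : Matrix (Fin 3) (Fin 3) ℂ) * Matrix.diagonal d *
      (!![aK, aK, aK; 0, 0, 0; 0, 0, 0] : Matrix (Fin 3) (Fin 3) ℂ)ᴴ).IsDiag := by
  intro i j hij
  fin_cases i <;> fin_cases j <;>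
    first
      | exact absurd rfl hij
      | simp [mul_apply, Fin.sum_univ_three, Matrix.diagonal_apply, conjTranspose_apply,
          Matrix.vecMul, dotProduct, Matrix.vecHead, Matrix.vecTail]

lemma dq2 (d : Fin 3 → ℂ) :
    ((!![-aK, aK, aK; 0, 0, 0; 0, 0, 0] : Matrix (Fin 3) (Fin 3) ℂ) * Matrix.diagonal d *
      (!![-aK, aK, aK; 0, 0, 0; 0, 0, 0] : Matrix (Fin 3) (Fin 3) ℂ)ᴴ).IsDiag := by
  intro i j hij
  fin_cases i <;> fin_cases j <;>
    first
      | exact absurd rfl hij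
      | simp [mul_apply, Fin.sum_univ_three, Matrix.diagonal_apply, conjTranspose_apply,
          Matrix.vecMul, dotProduct, Matrix.vecHead, Matrix.vecTail]

lemma dq3 (d : Fin 3 → ℂ) :
    ((!![aK, 0, 0; 0, aK, -aK; 0, 0, 0] : Matrix (Fin 3) (Fin 3) ℂ) * Matrix.diagonal d *
      (!![aK, 0, 0; 0, aK, -aK; 0, 0, 0] : Matrix (Fin 3) (Fin 3) ℂ)ᴴ).IsDiag := by
  intro i j hij
  fin_cases i <;> fin_cases j <;>
    first
      | exact absurd rfl hij
      | simp [mul_apply, Fin.sum_univ_three, Matrix.diagonal_apply, conjTranspose_apply,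
          Matrix.vecMul, dotProduct, Matrix.vecHead, Matrix.vecTail]

lemma part1 : (∑ n, (Kop n)ᴴ * (Kop n) = 1) := by
  ext i j
  fin_cases i <;> fin_cases j <;>
    simp [Kop, Fin.sum_univ_succ, mul_apply, conjTranspose_apply, Matrix.one_apply, aK_star] <;>
    ring_nf <;> rw [sq, aK_sq] <;> norm_num

lemma part2 : (∀ n, ∀ D : Matrix (Fin 3) (Fin 3) ℂ, D.IsDiag → ((Kop n) * D * (Kop n)ᴴ).IsDiag) := by
  intro n D hD
  obtain ⟨d, rfl⟩ : ∃ d, D = Matrix.diagonal d :=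
    ⟨D.diag, ((Matrix.isDiag_iff_diagonal_diag D).mp hD).symm⟩
  fin_cases n
  · exact dq1 d
  · exact dq1 d
  · exact dq2 d
  · exact dq2 d
  · exact dq3 d
  · exact dq3 d
  · exact dq3 d
  · exact dq3 d

lemma part3 : (∑ n, (Kop n) * (Matrix.vecMulVec ψMC (star ψMC)) * (Kop n)ᴴ =
      Matrix.single (0 : Fin 3) (0 : Fin 3) (1 : ℂ)) := by
  rw [hPQ, Fin.sum_univ_eight]
  rw [show Kop 0 = !![aK, aK, aK; 0, 0, 0; 0, 0, 0] from rfl,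
      show Kop 1 = !![aK, aK, aK; 0, 0, 0; 0, 0, 0] from rfl,
      show Kop 2 = !![-aK, aK, aK; 0, 0, 0; 0, 0, 0] from rfl,
      show Kop 3 = !![-aK, aK, aK; 0, 0, 0; 0, 0, 0] from rfl,
      show Kop 4 = !![aK, 0, 0; 0, aK, -aK; 0, 0, 0] from rfl,
      show Kop 5 = !![aK, 0, 0; 0, aK, -aK; 0, 0, 0] from rfl,
      show Kop 6 = !![aK, 0, 0; 0, aK, -aK; 0, 0, 0] from rfl,
      show Kop 7 = !![aK, 0, 0; 0, aK, -aK; 0, 0, 0] from rfl,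
      kq1, kq2, kq3]
  ext i j
  fin_cases i <;> fin_cases j <;>
    simp [Matrix.single, Matrix.vecHead, Matrix.vecTail] <;> norm_num

/-- The explicit Kraus family `Kop` is a valid incoherent channel mapping the
maximally coherent qutrit state to `|0⟩`, whose Kraus operators are not all of
a single permutation-triangular pattern. -/
theorem counterexample_incoherent_channel :
    (∑ n, (Kop n)ᴴ * (Kop n) = 1) ∧
    (∀ n, ∀ D : Matrix (Fin 3) (Fin 3) ℂ, D.IsDiag → ((Kop n) * D * (Kop n)ᴴ).IsDiag) ∧
    (∑ n, (Kop n) * (Matrix.vecMulVec ψMC (star ψMC)) * (Kop n)ᴴ =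
      Matrix.single (0 : Fin 3) (0 : Fin 3) (1 : ℂ)) := by
  exact ⟨part1, part2, part3⟩
end

section
/- Let p = (2/5, 2/5, 1/5) and q = (1/2, 1/4, 1/4) be probability vectors on Fin 3, and let φ = (3/5, 2/5) be a probability vector on Fin 2. Then: min_{0 ≤ l ≤ 2} C_l(p)/C_l(q) = 4/5; min_{0 ≤ l ≤ 2} C_l(q)/C_l(p) = 5/6; min_{0 ≤ l ≤ 5} C_l(p ⊗ φ)/C_l(q ⊗ φ) = 4/5; and min_{0 ≤ l ≤ 5} C_l(q ⊗ φ)/C_l(p ⊗ φ) = 35/38. -/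
open Finset

lemma maxSum_eq' {ι : Type*} [Fintype ι] [DecidableEq ι] (p : ι → ℝ) (pN : ι → ℕ)
    (D : ℝ) (hD : 0 < D) (hp : ∀ i, p i = pN i / D) (k : ℕ) (vN : ℕ)
    (hex : ∃ S : Finset ι, S.card = k ∧ ∑ i ∈ S, pN i = vN)
    (hb : ∀ S : Finset ι, S.card = k → ∑ i ∈ S, pN i ≤ vN) :
    maxSum p k = vN / D := by
  obtain ⟨S₀, h₀, hs₀⟩ := hex
  have key : ∀ S : Finset ι, ∑ i ∈ S, p i = ((∑ i ∈ S, pN i : ℕ) : ℝ) / D := by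
    intro S
    rw [Nat.cast_sum, Finset.sum_div]
    exact Finset.sum_congr rfl fun i _ => hp i
  apply le_antisymm
  · apply Real.sSup_le
    · rintro x ⟨S, hS, rfl⟩
      rw [key]
      gcongr
      exact_mod_cast hb S hS
    · positivity
  · apply le_csSup
    · exact ⟨vN / D, by rintro x ⟨S, hS, rfl⟩; rw [key]; gcongr; exact_mod_cast hb S hS⟩
    · exact ⟨S₀, h₀, by rw [key, hs₀]⟩

lemma Pconv_eq' {ι : Type*} [Fintype ι] (n : ℕ) (p q : ι → ℝ) (v : ℝ) (l₀ : ℕ)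
    (hl₀ : l₀ < n) (hv : Cl p l₀ / Cl q l₀ = v)
    (hlb : ∀ l < n, v ≤ Cl p l / Cl q l) : Pconv n p q = v := by
  unfold Pconv
  apply le_antisymm
  · exact csInf_le ⟨v, by rintro x ⟨l, hl, rfl⟩; exact hlb l hl⟩ ⟨l₀, hl₀, hv.symm⟩
  · exact le_csInf ⟨_, l₀, hl₀, hv.symm⟩ (by rintro x ⟨l, hl, rfl⟩; exact hlb l hl)

/-- A catalyst increasing the optimal conversion probability in one direction
(from `5/6` to `35/38`) but not the other (it stays `4/5`). -/
theorem stochastic_catalysis_example :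
    Pconv 3 (![2/5, 2/5, 1/5] : Fin 3 → ℝ) (![1/2, 1/4, 1/4] : Fin 3 → ℝ) = 4/5 ∧
    Pconv 3 (![1/2, 1/4, 1/4] : Fin 3 → ℝ) (![2/5, 2/5, 1/5] : Fin 3 → ℝ) = 5/6 ∧
    Pconv 6 (tensor (![2/5, 2/5, 1/5] : Fin 3 → ℝ) (![3/5, 2/5] : Fin 2 → ℝ))
            (tensor (![1/2, 1/4, 1/4] : Fin 3 → ℝ) (![3/5, 2/5] : Fin 2 → ℝ)) = 4/5 ∧
    Pconv 6 (tensor (![1/2, 1/4, 1/4] : Fin 3 → ℝ) (![3/5, 2/5] : Fin 2 → ℝ))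
            (tensor (![2/5, 2/5, 1/5] : Fin 3 → ℝ) (![3/5, 2/5] : Fin 2 → ℝ)) = 35/38 := by
  set p : Fin 3 → ℝ := ![2/5, 2/5, 1/5] with hpdef
  set q : Fin 3 → ℝ := ![1/2, 1/4, 1/4] with hqdef
  set φ : Fin 2 → ℝ := ![3/5, 2/5] with hφdef
  have hpN : ∀ i, p i = (![2,2,1] : Fin 3 → ℕ) i / 5 := by
    intro i; fin_cases i <;> norm_num [hpdef]
  have hqN : ∀ i, q i = (![2,1,1] : Fin 3 → ℕ) i / 4 := by
    intro i; fin_cases i <;> norm_num [hqdef]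
  have hpφN : ∀ x : Fin 3 × Fin 2,
      tensor p φ x = ((![2,2,1] : Fin 3 → ℕ) x.1 * (![3,2] : Fin 2 → ℕ) x.2 : ℕ) / 25 := by
    rintro ⟨i, j⟩; fin_cases i <;> fin_cases j <;> norm_num [tensor, hpdef, hφdef]
  have hqφN : ∀ x : Fin 3 × Fin 2,
      tensor q φ x = ((![2,1,1] : Fin 3 → ℕ) x.1 * (![3,2] : Fin 2 → ℕ) x.2 : ℕ) / 20 := by
    rintro ⟨i, j⟩; fin_cases i <;> fin_cases j <;> norm_num [tensor, hqdef, hφdef]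
  -- Cl values for p
  have cp : ∀ k vN : ℕ,
      (∃ S : Finset (Fin 3), S.card = k ∧ ∑ i ∈ S, (![2,2,1] : Fin 3 → ℕ) i = vN) →
      (∀ S : Finset (Fin 3), S.card = k → ∑ i ∈ S, (![2,2,1] : Fin 3 → ℕ) i ≤ vN) →
      Cl p k = 1 - vN / 5 := by
    intro k vN hex hb
    rw [Cl, maxSum_eq' p _ 5 (by norm_num) hpN k vN hex hb]
  have cq : ∀ k vN : ℕ,
      (∃ S : Finset (Fin 3), S.card = k ∧ ∑ i ∈ S, (![2,1,1] : Fin 3 → ℕ) i = vN) →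
      (∀ S : Finset (Fin 3), S.card = k → ∑ i ∈ S, (![2,1,1] : Fin 3 → ℕ) i ≤ vN) →
      Cl q k = 1 - vN / 4 := by
    intro k vN hex hb
    rw [Cl, maxSum_eq' q _ 4 (by norm_num) hqN k vN hex hb]
  have cpφ : ∀ k vN : ℕ,
      (∃ S : Finset (Fin 3 × Fin 2), S.card = k ∧
        ∑ i ∈ S, ((![2,2,1] : Fin 3 → ℕ) i.1 * (![3,2] : Fin 2 → ℕ) i.2) = vN) →
      (∀ S : Finset (Fin 3 × Fin 2), S.card = k →
        ∑ i ∈ S, ((![2,2,1] : Fin 3 → ℕ) i.1 * (![3,2] : Fin 2 → ℕ) i.2) ≤ vN) →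
      Cl (tensor p φ) k = 1 - vN / 25 := by
    intro k vN hex hb
    rw [Cl, maxSum_eq' (tensor p φ) _ 25 (by norm_num) hpφN k vN hex hb]
  have cqφ : ∀ k vN : ℕ,
      (∃ S : Finset (Fin 3 × Fin 2), S.card = k ∧
        ∑ i ∈ S, ((![2,1,1] : Fin 3 → ℕ) i.1 * (![3,2] : Fin 2 → ℕ) i.2) = vN) →
      (∀ S : Finset (Fin 3 × Fin 2), S.card = k →
        ∑ i ∈ S, ((![2,1,1] : Fin 3 → ℕ) i.1 * (![3,2] : Fin 2 → ℕ) i.2) ≤ vN) →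
      Cl (tensor q φ) k = 1 - vN / 20 := by
    intro k vN hex hb
    rw [Cl, maxSum_eq' (tensor q φ) _ 20 (by norm_num) hqφN k vN hex hb]
  have cp0 : Cl p 0 = 1 - (0:ℕ)/5 := cp 0 0 (by decide) (by decide)
  have cp1 : Cl p 1 = 1 - (2:ℕ)/5 := cp 1 2 (by decide) (by decide)
  have cp2 : Cl p 2 = 1 - (4:ℕ)/5 := cp 2 4 (by decide) (by decide)
  have cq0 : Cl q 0 = 1 - (0:ℕ)/4 := cq 0 0 (by decide) (by decide)
  have cq1 : Cl q 1 = 1 - (2:ℕ)/4 := cq 1 2 (by decide) (by decide)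
  have cq2 : Cl q 2 = 1 - (3:ℕ)/4 := cq 2 3 (by decide) (by decide)
  have cpφ0 : Cl (tensor p φ) 0 = 1 - (0:ℕ)/25 := cpφ 0 0 (by decide) (by decide)
  have cpφ1 : Cl (tensor p φ) 1 = 1 - (6:ℕ)/25 := cpφ 1 6 (by decide) (by decide)
  have cpφ2 : Cl (tensor p φ) 2 = 1 - (12:ℕ)/25 := cpφ 2 12 (by decide) (by decide)
  have cpφ3 : Cl (tensor p φ) 3 = 1 - (16:ℕ)/25 := cpφ 3 16 (by decide) (by decide)
  have cpφ4 : Cl (tensor p φ) 4 = 1 - (20:ℕ)/25 := cpφ 4 20 (by decide) (by decide)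
  have cpφ5 : Cl (tensor p φ) 5 = 1 - (23:ℕ)/25 := cpφ 5 23 (by decide) (by decide)
  have cqφ0 : Cl (tensor q φ) 0 = 1 - (0:ℕ)/20 := cqφ 0 0 (by decide) (by decide)
  have cqφ1 : Cl (tensor q φ) 1 = 1 - (6:ℕ)/20 := cqφ 1 6 (by decide) (by decide)
  have cqφ2 : Cl (tensor q φ) 2 = 1 - (10:ℕ)/20 := cqφ 2 10 (by decide) (by decide)
  have cqφ3 : Cl (tensor q φ) 3 = 1 - (13:ℕ)/20 := cqφ 3 13 (by decide) (by decide)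
  have cqφ4 : Cl (tensor q φ) 4 = 1 - (16:ℕ)/20 := cqφ 4 16 (by decide) (by decide)
  have cqφ5 : Cl (tensor q φ) 5 = 1 - (18:ℕ)/20 := cqφ 5 18 (by decide) (by decide)
  refine ⟨?_, ?_, ?_, ?_⟩
  · refine Pconv_eq' 3 p q (4/5) 2 (by norm_num) (by rw [cp2, cq2]; norm_num) ?_
    intro l hl
    interval_cases l <;>
      simp only [cp0, cp1, cp2, cq0, cq1, cq2] <;> norm_num
  · refine Pconv_eq' 3 q p (5/6) 1 (by norm_num) (by rw [cp1, cq1]; norm_num) ?_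
    intro l hl
    interval_cases l <;>
      simp only [cp0, cp1, cp2, cq0, cq1, cq2] <;> norm_num
  · refine Pconv_eq' 6 (tensor p φ) (tensor q φ) (4/5) 5 (by norm_num)
      (by rw [cpφ5, cqφ5]; norm_num) ?_
    intro l hl
    interval_cases l <;>
      simp only [cpφ0, cpφ1, cpφ2, cpφ3, cpφ4, cpφ5, cqφ0, cqφ1, cqφ2, cqφ3, cqφ4, cqφ5] <;>
      norm_num
  · refine Pconv_eq' 6 (tensor q φ) (tensor p φ) (35/38) 1 (by norm_num)
      (by rw [cpφ1, cqφ1]; norm_num) ?_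
    intro l hl
    interval_cases l <;>
      simp only [cpφ0, cpφ1, cpφ2, cpφ3, cpφ4, cpφ5, cqφ0, cqφ1, cqφ2, cqφ3, cqφ4, cqφ5] <;>
      norm_num
end

section
/- Let p, q be probability vectors on Fin d with p ≺ q, and suppose q is not a rearrangement of p (there is no permutation σ of Fin d with q = p ∘ σ). Then: (a) for every α > 0 with α ≠ 1, (1/(1−α)) * Real.log (∑ i, (p i)^α) > (1/(1−α)) * Real.log (∑ i, (q i)^α); (b) H(p) > H(q); and (c) if moreover p i > 0 and q i > 0 for all i, then for every α < 0, −(1/(1−α)) * Real.log (∑ i, (p i)^α) > −(1/(1−α)) * Real.log (∑ i, (q i)^α), and ∑ i, Real.log (p i) > ∑ i, Real.log (q i). -/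
open Finset

/-- Shannon entropy (with `0 * log 0 = 0` automatic since `Real.log 0 = 0`) -/
noncomputable def shannon {ι : Type*} [Fintype ι] (p : ι → ℝ) : ℝ :=
  -∑ i, p i * Real.log (p i)

namespace RenyiSchur

/-! ### Abel summation -/

lemma abel_aux (c g : ℕ → ℝ) :
    ∀ n : ℕ, (∀ i j, i ≤ j → j ≤ n → c j ≤ c i) →
      (∀ k, k ≤ n → 0 ≤ ∑ i ∈ range k, g i) →
      c n * ∑ i ∈ range (n + 1), g i ≤ ∑ i ∈ range (n + 1), c i * g i := by
  intro n
  induction n with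
  | zero => intro _ _; simp [mul_comm]
  | succ n ih =>
    intro hc hg
    have H := ih (fun i j hij hj => hc i j hij (by omega)) (fun k hk => hg k (by omega))
    have h1 : c (n + 1) ≤ c n := hc n (n + 1) (by omega) le_rfl
    have h2 : 0 ≤ ∑ i ∈ range (n + 1), g i := hg (n + 1) le_rfl
    rw [sum_range_succ (fun i => c i * g i) (n + 1), sum_range_succ g (n + 1)]
    nlinarith [H]

lemma abel (n : ℕ) (c g : ℕ → ℝ)
    (hc : ∀ i j, i ≤ j → j < n → c j ≤ c i)
    (hg : ∀ k, k ≤ n → 0 ≤ ∑ i ∈ range k, g i)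
    (htot : ∑ i ∈ range n, g i = 0) :
    0 ≤ ∑ i ∈ range n, c i * g i := by
  cases n with
  | zero => simp
  | succ n =>
    have H := abel_aux c g n (fun i j hij hj => hc i j hij (by omega))
      (fun k hk => hg k (by omega))
    rw [htot, mul_zero] at H
    exact H

lemma key (n : ℕ) (x y c : ℕ → ℝ) (f : ℝ → ℝ)
    (hc : ∀ i j, i ≤ j → j < n → c j ≤ c i)
    (htan : ∀ i, i < n → f (x i) + c i * (y i - x i) ≤ f (y i))
    (hstrict : ∃ i, i < n ∧ f (x i) + c i * (y i - x i) < f (y i))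
    (hpart : ∀ k, k ≤ n → ∑ i ∈ range k, x i ≤ ∑ i ∈ range k, y i)
    (htot : ∑ i ∈ range n, x i = ∑ i ∈ range n, y i) :
    ∑ i ∈ range n, f (x i) < ∑ i ∈ range n, f (y i) := by
  have h0 : 0 ≤ ∑ i ∈ range n, c i * (y i - x i) := by
    apply abel n c (fun i => y i - x i) hc
    · intro k hk; rw [sum_sub_distrib]; linarith [hpart k hk]
    · rw [sum_sub_distrib]; linarith [htot]
  obtain ⟨i0, hi0, hs⟩ := hstrict
  have h1 : ∑ i ∈ range n, (f (x i) + c i * (y i - x i)) < ∑ i ∈ range n, f (y i) :=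
    Finset.sum_lt_sum (fun i hi => htan i (mem_range.mp hi)) ⟨i0, mem_range.mpr hi0, hs⟩
  rw [sum_add_distrib] at h1
  linarith

/-! ### Decreasing rearrangement -/

variable {d : ℕ}

/-- decreasing rearrangement, padded with zeros -/
noncomputable def sv (p : Fin d → ℝ) : ℕ → ℝ :=
  fun k => if h : k < d then p (Tuple.sort (fun i => -p i) ⟨k, h⟩) else 0

lemma sv_nonneg (p : Fin d → ℝ) (hp : ∀ i, 0 ≤ p i) (k : ℕ) : 0 ≤ sv p k := by
  unfold sv; split
  · exact hp _
  · exact le_refl 0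

lemma sv_pos (p : Fin d → ℝ) (hp : ∀ i, 0 < p i) {k : ℕ} (hk : k < d) : 0 < sv p k := by
  simp only [sv, dif_pos hk]; exact hp _

lemma sv_anti (p : Fin d → ℝ) (hp : ∀ i, 0 ≤ p i) {k l : ℕ} (hkl : k ≤ l) :
    sv p l ≤ sv p k := by
  unfold sv
  by_cases h : l < d
  · have hk : k < d := lt_of_le_of_lt hkl h
    rw [dif_pos h, dif_pos hk]
    have := Tuple.monotone_sort (fun i => -p i)
      (show (⟨k, hk⟩ : Fin d) ≤ ⟨l, h⟩ from hkl)
    simpa using this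
  · rw [dif_neg h]
    exact sv_nonneg p hp k

lemma sum_sv (p : Fin d → ℝ) (f : ℝ → ℝ) :
    ∑ k ∈ range d, f (sv p k) = ∑ i, f (p i) := by
  rw [← Fin.sum_univ_eq_sum_range (fun k => f (sv p k)) d,
    ← Equiv.sum_comp (Tuple.sort (fun i => -p i)) (fun i => f (p i))]
  apply Finset.sum_congr rfl
  intro i _
  simp [sv, i.isLt]

lemma fin_strictMono_le {k : ℕ} (e : Fin k → Fin d) (he : StrictMono e) (a : Fin k) :
    (a : ℕ) ≤ (e a : ℕ) := by
  have H : ∀ v : ℕ, ∀ h : v < k, v ≤ (e ⟨v, h⟩ : ℕ) := by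
    intro v
    induction v with
    | zero => intro h; exact Nat.zero_le _
    | succ n ih =>
      intro h
      have h' : n < k := Nat.lt_of_succ_lt h
      have hlt : e ⟨n, h'⟩ < e ⟨n + 1, h⟩ := he (by simp [Fin.lt_def])
      have := ih h'
      have : (e ⟨n, h'⟩ : ℕ) < (e ⟨n + 1, h⟩ : ℕ) := hlt
      omega
  simpa using H a.val a.isLt

lemma sum_le_topk (h : ℕ → ℝ) (hmono : ∀ i j, i ≤ j → h j ≤ h i)
    {k : ℕ} (T : Finset (Fin d)) (hT : T.card = k) :
    ∑ j ∈ T, h j.val ≤ ∑ i ∈ range k, h i := by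
  have himg : Finset.image (fun a => T.orderEmbOfFin hT a) univ = T := by
    ext j
    simp only [Finset.mem_image, Finset.mem_univ, true_and]
    constructor
    · rintro ⟨a, rfl⟩; exact Finset.orderEmbOfFin_mem T hT a
    · intro hj
      have : j ∈ Set.range (T.orderEmbOfFin hT) := by
        rw [Finset.range_orderEmbOfFin]; exact hj
      obtain ⟨a, ha⟩ := this; exact ⟨a, ha⟩
  rw [← himg, Finset.sum_image (by
    intro a _ b _ hab
    exact (T.orderEmbOfFin hT).injective hab)]
  rw [← Fin.sum_univ_eq_sum_range (fun i => h i) k]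
  apply Finset.sum_le_sum
  intro a _
  exact hmono a.val ((T.orderEmbOfFin hT) a).val
    (fin_strictMono_le _ (T.orderEmbOfFin hT).strictMono a)

lemma maxSum_eq (p : Fin d → ℝ) (hp : ∀ i, 0 ≤ p i) {k : ℕ} (hk : k ≤ d) :
    maxSum p k = ∑ i ∈ range k, sv p i := by
  apply IsGreatest.csSup_eq
  constructor
  · refine ⟨Finset.image
      (fun j : Fin k => (Tuple.sort (fun i => -p i)) (Fin.castLE hk j)) univ, ?_, ?_⟩
    · have hinj : Function.Injective
          (fun j : Fin k => (Tuple.sort (fun i => -p i)) (Fin.castLE hk j)) :=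
        fun a b hab => Fin.castLE_injective hk ((Tuple.sort (fun i => -p i)).injective hab)
      rw [Finset.card_image_of_injective _ hinj, card_univ, Fintype.card_fin]
    · rw [Finset.sum_image (by
        intro a _ b _ hab
        exact Fin.castLE_injective hk ((Tuple.sort (fun i => -p i)).injective hab))]
      rw [← Fin.sum_univ_eq_sum_range (fun i => sv p i) k]
      apply Finset.sum_congr rfl
      intro j _
      have hj : (j : ℕ) < d := lt_of_lt_of_le j.isLt hk
      simp only [sv, dif_pos hj]
      rfl
  · rintro x ⟨S, hScard, rfl⟩
    set σ := Tuple.sort (fun i => -p i) with hσ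
    have hTcard : (S.image σ.symm).card = k := by
      rw [Finset.card_image_of_injective _ σ.symm.injective, hScard]
    have h1 : ∑ i ∈ S, p i = ∑ j ∈ S.image σ.symm, sv p j.val := by
      rw [Finset.sum_image (by intro a _ b _ hab; exact σ.symm.injective hab)]
      apply Finset.sum_congr rfl
      intro i _
      simp [sv, (σ.symm i).isLt]
      exact (congrArg p (σ.apply_symm_apply i)).symm
    rw [h1]
    exact sum_le_topk (sv p) (fun i j hij => sv_anti p hp hij) _ hTcard

lemma exists_diff (p q : Fin d → ℝ)
    (hnoperm : ¬ ∃ σ : Equiv.Perm (Fin d), q = p ∘ σ) :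
    ∃ k, k < d ∧ sv p k ≠ sv q k := by
  by_contra hcon
  push_neg at hcon
  apply hnoperm
  refine ⟨(Tuple.sort (fun i => -q i)).symm.trans (Tuple.sort (fun i => -p i)), ?_⟩
  funext j
  have h1 := hcon ((Tuple.sort (fun i => -q i)).symm j).val
    ((Tuple.sort (fun i => -q i)).symm j).isLt
  simp only [sv, dif_pos ((Tuple.sort (fun i => -q i)).symm j).isLt, Fin.eta] at h1
  rw [Equiv.apply_symm_apply] at h1
  simp only [Function.comp_apply, Equiv.trans_apply]
  exact h1.symm

/-! ### Tangent line inequalities -/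

lemma bern_neg {α t : ℝ} (hα : α < 0) (ht : 0 < t) (hne : t ≠ 1) :
    1 + α * (t - 1) < t ^ α := by
  have htα : 0 < t ^ α := Real.rpow_pos_of_pos ht α
  rcases le_or_gt (1 + α * (t - 1)) 0 with h | h
  · linarith
  · have h1α : 0 < 1 - α := by linarith
    have hlam0 : 0 < -α / (1 - α) := div_pos (by linarith) h1α
    have hlam1 : 0 < 1 / (1 - α) := by positivity
    have hsum : -α / (1 - α) + 1 / (1 - α) = 1 := by field_simp; ring
    have hne2 : t ≠ 1 + α * (t - 1) := by
      intro hh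
      apply hne
      have h3 : (1 - α) * (t - 1) = 0 := by nlinarith [hh]
      have h4 : t - 1 = 0 := by
        rcases mul_eq_zero.mp h3 with h5 | h5
        · linarith
        · exact h5
      linarith
    have hcc := strictConcaveOn_log_Ioi.2 (Set.mem_Ioi.mpr ht) (Set.mem_Ioi.mpr h)
      hne2 hlam0 hlam1 hsum
    rw [smul_eq_mul, smul_eq_mul, smul_eq_mul, smul_eq_mul] at hcc
    have hcomb : -α / (1 - α) * t + 1 / (1 - α) * (1 + α * (t - 1)) = 1 := by
      field_simp; ring
    rw [hcomb, Real.log_one] at hcc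
    have hlog : Real.log (1 + α * (t - 1)) < α * Real.log t := by
      have h3 := mul_lt_mul_of_pos_left
        (show 1 / (1 - α) * Real.log (1 + α * (t - 1))
            < -(-α / (1 - α) * Real.log t) by linarith) h1α
      have h4 : (1 - α) * (1 / (1 - α) * Real.log (1 + α * (t - 1)))
          = Real.log (1 + α * (t - 1)) := by field_simp
      have h5 : (1 - α) * -(-α / (1 - α) * Real.log t) = α * Real.log t := by
        field_simp
      rw [h4, h5] at h3
      exact h3
    have h6 : Real.log (1 + α * (t - 1)) < Real.log (t ^ α) := by
      rw [Real.log_rpow ht]; exact hlog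
    exact (Real.log_lt_log_iff h htα).mp h6

lemma div_ne_one_of_ne {a b : ℝ} (ha : 0 < a) (hne : a ≠ b) : b / a - 1 ≠ 0 := by
  intro hh
  apply hne
  have : b / a = 1 := by linarith
  field_simp at this
  linarith

/-- tangent line inequality for `t ^ α`, `α > 1` -/
lemma tangent_A {α : ℝ} (hα : 1 < α) {a b : ℝ} (ha : 0 < a) (hb : 0 ≤ b) (hne : a ≠ b) :
    a ^ α + α * a ^ (α - 1) * (b - a) < b ^ α := by
  have ht : -1 ≤ b / a - 1 := by
    have : 0 ≤ b / a := div_nonneg hb ha.le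
    linarith
  have hB := one_add_mul_self_lt_rpow_one_add ht (div_ne_one_of_ne ha hne) hα
  have h1 : (1 : ℝ) + (b / a - 1) = b / a := by ring
  rw [h1, Real.div_rpow hb ha.le] at hB
  have h3 : 0 < a ^ α := Real.rpow_pos_of_pos ha α
  have h4 : a ^ (α - 1) = a ^ α / a := by rw [Real.rpow_sub ha, Real.rpow_one]
  have h5 := mul_lt_mul_of_pos_left hB h3
  have h6 : a ^ α * (b ^ α / a ^ α) = b ^ α := by field_simp
  rw [h6] at h5
  calc a ^ α + α * a ^ (α - 1) * (b - a)
      = a ^ α * (1 + α * (b / a - 1)) := by rw [h4]; field_simp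
    _ < b ^ α := h5

/-- tangent line inequality for `-t ^ α`, `0 < α < 1` -/
lemma tangent_B {α : ℝ} (hα0 : 0 < α) (hα1 : α < 1) {a b : ℝ} (ha : 0 < a) (hb : 0 ≤ b)
    (hne : a ≠ b) :
    -(a ^ α) + -(α * a ^ (α - 1)) * (b - a) < -(b ^ α) := by
  have ht : -1 ≤ b / a - 1 := by
    have : 0 ≤ b / a := div_nonneg hb ha.le
    linarith
  have hB := rpow_one_add_lt_one_add_mul_self ht (div_ne_one_of_ne ha hne) hα0 hα1
  have h1 : (1 : ℝ) + (b / a - 1) = b / a := by ring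
  rw [h1, Real.div_rpow hb ha.le] at hB
  have h3 : 0 < a ^ α := Real.rpow_pos_of_pos ha α
  have h4 : a ^ (α - 1) = a ^ α / a := by rw [Real.rpow_sub ha, Real.rpow_one]
  have h5 := mul_lt_mul_of_pos_left hB h3
  have h6 : a ^ α * (b ^ α / a ^ α) = b ^ α := by field_simp
  rw [h6] at h5
  have h7 : a ^ α + α * a ^ (α - 1) * (b - a) = a ^ α * (1 + α * (b / a - 1)) := by
    rw [h4]; field_simp
  nlinarith [h5, h7]

/-- tangent line inequality for `t ^ α`, `α < 0` -/
lemma tangent_C {α : ℝ} (hα : α < 0) {a b : ℝ} (ha : 0 < a) (hb : 0 < b) (hne : a ≠ b) :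
    a ^ α + α * a ^ (α - 1) * (b - a) < b ^ α := by
  have hne' : b / a ≠ 1 := by
    intro hh
    exact div_ne_one_of_ne ha hne (by linarith)
  have hB := bern_neg hα (div_pos hb ha) hne'
  rw [Real.div_rpow hb.le ha.le] at hB
  have h3 : 0 < a ^ α := Real.rpow_pos_of_pos ha α
  have h4 : a ^ (α - 1) = a ^ α / a := by rw [Real.rpow_sub ha, Real.rpow_one]
  have h5 := mul_lt_mul_of_pos_left hB h3
  have h6 : a ^ α * (b ^ α / a ^ α) = b ^ α := by field_simp
  rw [h6] at h5
  calc a ^ α + α * a ^ (α - 1) * (b - a)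
      = a ^ α * (1 + α * (b / a - 1)) := by rw [h4]; field_simp
    _ < b ^ α := h5

/-- tangent line inequality for `t * log t` -/
lemma tangent_shannon {a b : ℝ} (ha : 0 < a) (hb : 0 ≤ b) (hne : a ≠ b) :
    a * Real.log a + (Real.log a + 1) * (b - a) < b * Real.log b := by
  rcases hb.lt_or_eq with hb | hb
  · have hne' : a / b ≠ 1 := by
      intro hh
      apply hne
      field_simp at hh
      linarith
    have hlog := Real.log_lt_sub_one_of_pos (div_pos ha hb) hne'
    rw [Real.log_div ha.ne' hb.ne'] at hlog
    have h2 := mul_lt_mul_of_pos_left hlog hb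
    have h3 : b * (a / b - 1) = a - b := by field_simp
    rw [h3] at h2
    nlinarith [h2]
  · subst hb
    have h1 : a * Real.log a + (Real.log a + 1) * (0 - a) = -a := by ring
    rw [h1]
    simp [Real.log_zero]
    linarith

/-- tangent line inequality for `-log t` -/
lemma tangent_log {a b : ℝ} (ha : 0 < a) (hb : 0 < b) (hne : a ≠ b) :
    -Real.log a + -(1 / a) * (b - a) < -Real.log b := by
  have hne' : b / a ≠ 1 := by
    intro hh
    apply hne
    field_simp at hh
    linarith
  have hlog := Real.log_lt_sub_one_of_pos (div_pos hb ha) hne'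
  rw [Real.log_div hb.ne' ha.ne'] at hlog
  have h1 : b / a - 1 = (b - a) / a := by field_simp
  rw [h1] at hlog
  have h2 : -(1 / a) * (b - a) = -((b - a) / a) := by ring
  linarith [h2]

/-! ### Main strict Schur convexity lemmas -/

lemma main (d : ℕ) (p q : Fin d → ℝ) (hp : IsProbVec p) (hq : IsProbVec q)
    (hmaj : Maj p q) (hnoperm : ¬ ∃ σ : Equiv.Perm (Fin d), q = p ∘ σ)
    (f φ : ℝ → ℝ) (hf0 : f 0 = 0)
    (hφ : ∀ a b : ℝ, 0 < a → a ≤ b → φ a ≤ φ b)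
    (hstrict : ∀ a b : ℝ, 0 < a → 0 ≤ b → a ≠ b → f a + φ a * (b - a) < f b) :
    ∑ i, f (p i) < ∑ i, f (q i) := by
  classical
  have hP : ∀ k, k ≤ d → ∑ i ∈ range k, sv p i ≤ ∑ i ∈ range k, sv q i := by
    intro k hk
    rw [← maxSum_eq p hp.1 hk, ← maxSum_eq q hq.1 hk]
    exact hmaj.2 k
  have hTd : ∑ i ∈ range d, sv p i = ∑ i ∈ range d, sv q i := by
    have h1 := sum_sv p (fun t => t)
    have h2 := sum_sv q (fun t => t)
    rw [h1, h2, hp.2, hq.2]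
  have hex : ∃ k, sv p k = 0 := ⟨d, by simp [sv]⟩
  set m := Nat.find hex with hm
  have hm_le : m ≤ d := Nat.find_le (by simp [sv])
  have hm0 : sv p m = 0 := Nat.find_spec hex
  have hpos : ∀ i, i < m → 0 < sv p i := fun i hi =>
    lt_of_le_of_ne (sv_nonneg p hp.1 i) (fun hh => Nat.find_min hex hi hh.symm)
  have hx0 : ∀ i, m ≤ i → sv p i = 0 := fun i hi =>
    le_antisymm (hm0 ▸ sv_anti p hp.1 hi) (sv_nonneg p hp.1 i)
  have hrm : ∑ i ∈ range m, sv p i = ∑ i ∈ range d, sv p i := by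
    rw [← Finset.sum_range_add_sum_Ico (sv p) hm_le]
    have hz : ∑ i ∈ Finset.Ico m d, sv p i = 0 :=
      Finset.sum_eq_zero (fun i hi => hx0 i (Finset.mem_Ico.mp hi).1)
    rw [hz, add_zero]
  have hIq : ∑ i ∈ range m, sv q i + ∑ i ∈ Finset.Ico m d, sv q i
      = ∑ i ∈ range d, sv q i := Finset.sum_range_add_sum_Ico _ hm_le
  have hy_tail : ∑ i ∈ Finset.Ico m d, sv q i = 0 := by
    have h2 := hP m hm_le
    have h4 : 0 ≤ ∑ i ∈ Finset.Ico m d, sv q i :=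
      Finset.sum_nonneg (fun i _ => sv_nonneg q hq.1 i)
    linarith
  have hy0 : ∀ i, m ≤ i → sv q i = 0 := by
    intro i hi
    by_cases hid : i < d
    · exact (Finset.sum_eq_zero_iff_of_nonneg
        (fun j _ => sv_nonneg q hq.1 j)).mp hy_tail i (Finset.mem_Ico.mpr ⟨hi, hid⟩)
    · simp [sv, hid]
  have htot_m : ∑ i ∈ range m, sv p i = ∑ i ∈ range m, sv q i := by
    linarith
  obtain ⟨k0, hk0d, hk0ne⟩ := exists_diff p q hnoperm
  have hk0m : k0 < m := by
    by_contra hcc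
    push_neg at hcc
    exact hk0ne (by rw [hx0 k0 hcc, hy0 k0 hcc])
  have htan : ∀ i, i < m →
      f (sv p i) + φ (sv p i) * (sv q i - sv p i) ≤ f (sv q i) := by
    intro i hi
    by_cases he : sv p i = sv q i
    · rw [he]; simp
    · exact (hstrict _ _ (hpos i hi) (sv_nonneg q hq.1 i) he).le
  have hkey := key m (sv p) (sv q) (fun i => φ (sv p i)) f
    (fun i j hij hj => hφ (sv p j) (sv p i) (hpos j hj) (sv_anti p hp.1 hij))
    htan
    ⟨k0, hk0m, hstrict _ _ (hpos k0 hk0m) (sv_nonneg q hq.1 k0) hk0ne⟩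
    (fun k hk => hP k (hk.trans hm_le))
    htot_m
  have hfin_p : ∑ i ∈ range d, f (sv p i) = ∑ i ∈ range m, f (sv p i) := by
    rw [← Finset.sum_range_add_sum_Ico (fun i => f (sv p i)) hm_le]
    have hz : ∑ i ∈ Finset.Ico m d, f (sv p i) = 0 :=
      Finset.sum_eq_zero (fun i hi => by rw [hx0 i (Finset.mem_Ico.mp hi).1, hf0])
    rw [hz, add_zero]
  have hfin_q : ∑ i ∈ range d, f (sv q i) = ∑ i ∈ range m, f (sv q i) := by
    rw [← Finset.sum_range_add_sum_Ico (fun i => f (sv q i)) hm_le]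
    have hz : ∑ i ∈ Finset.Ico m d, f (sv q i) = 0 :=
      Finset.sum_eq_zero (fun i hi => by rw [hy0 i (Finset.mem_Ico.mp hi).1, hf0])
    rw [hz, add_zero]
  rw [← sum_sv p f, ← sum_sv q f, hfin_p, hfin_q]
  exact hkey

lemma main_pos (d : ℕ) (p q : Fin d → ℝ) (hp : IsProbVec p) (hq : IsProbVec q)
    (hmaj : Maj p q) (hnoperm : ¬ ∃ σ : Equiv.Perm (Fin d), q = p ∘ σ)
    (hppos : ∀ i, 0 < p i) (hqpos : ∀ i, 0 < q i)
    (f φ : ℝ → ℝ)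
    (hφ : ∀ a b : ℝ, 0 < a → a ≤ b → φ a ≤ φ b)
    (hstrict : ∀ a b : ℝ, 0 < a → 0 < b → a ≠ b → f a + φ a * (b - a) < f b) :
    ∑ i, f (p i) < ∑ i, f (q i) := by
  have hP : ∀ k, k ≤ d → ∑ i ∈ range k, sv p i ≤ ∑ i ∈ range k, sv q i := by
    intro k hk
    rw [← maxSum_eq p hp.1 hk, ← maxSum_eq q hq.1 hk]
    exact hmaj.2 k
  have hTd : ∑ i ∈ range d, sv p i = ∑ i ∈ range d, sv q i := by
    have h1 := sum_sv p (fun t => t)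
    have h2 := sum_sv q (fun t => t)
    rw [h1, h2, hp.2, hq.2]
  obtain ⟨k0, hk0d, hk0ne⟩ := exists_diff p q hnoperm
  have htan : ∀ i, i < d →
      f (sv p i) + φ (sv p i) * (sv q i - sv p i) ≤ f (sv q i) := by
    intro i hi
    by_cases he : sv p i = sv q i
    · rw [he]; simp
    · exact (hstrict _ _ (sv_pos p hppos hi) (sv_pos q hqpos hi) he).le
  have hkey := key d (sv p) (sv q) (fun i => φ (sv p i)) f
    (fun i j hij hj => hφ (sv p j) (sv p i) (sv_pos p hppos hj)
      (sv_anti p (fun i => (hppos i).le) hij))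
    htan
    ⟨k0, hk0d, hstrict _ _ (sv_pos p hppos hk0d) (sv_pos q hqpos hk0d) hk0ne⟩
    hP
    hTd
  rw [← sum_sv p f, ← sum_sv q f]
  exact hkey

lemma exists_pos {d : ℕ} (p : Fin d → ℝ) (hp : IsProbVec p) : ∃ i, 0 < p i := by
  by_contra h
  push_neg at h
  have h1 : ∑ i, p i ≤ 0 := Finset.sum_nonpos (fun i _ => h i)
  rw [hp.2] at h1
  linarith

end RenyiSchur

/-- Strict Schur concavity of the Rényi entropies for `α ∈ (-∞,0) ∪ (0,∞)`
and of `∑ i, log (p i)`. -/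
theorem renyi_strict_schur_concavity
    (d : ℕ) (p q : Fin d → ℝ) (hp : IsProbVec p) (hq : IsProbVec q)
    (hmaj : Maj p q) (hnoperm : ¬ ∃ σ : Equiv.Perm (Fin d), q = p ∘ σ) :
    (∀ α : ℝ, 0 < α → α ≠ 1 →
      (1 / (1 - α)) * Real.log (∑ i, (q i) ^ α) <
        (1 / (1 - α)) * Real.log (∑ i, (p i) ^ α)) ∧
    shannon q < shannon p ∧
    ((∀ i, 0 < p i) → (∀ i, 0 < q i) →
      (∀ α : ℝ, α < 0 →
        -((1 / (1 - α)) * Real.log (∑ i, (q i) ^ α)) <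
          -((1 / (1 - α)) * Real.log (∑ i, (p i) ^ α))) ∧
      (∑ i, Real.log (q i) < ∑ i, Real.log (p i))) := by
  refine ⟨?_, ?_, ?_⟩
  · intro α hα0 hα1
    rcases lt_or_gt_of_ne hα1 with hlt | hgt
    · -- 0 < α < 1
      have S : (∑ i, -((p i) ^ α)) < ∑ i, -((q i) ^ α) :=
        RenyiSchur.main d p q hp hq hmaj hnoperm
          (fun t => -(t ^ α)) (fun t => -(α * t ^ (α - 1)))
          (by simp [Real.zero_rpow (ne_of_gt hα0)])
          (by
            intro a b ha hab
            have h1 : b ^ (α - 1) ≤ a ^ (α - 1) :=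
              Real.rpow_le_rpow_of_nonpos ha hab (by linarith)
            have h2 : α * b ^ (α - 1) ≤ α * a ^ (α - 1) :=
              mul_le_mul_of_nonneg_left h1 hα0.le
            show -(α * a ^ (α - 1)) ≤ -(α * b ^ (α - 1))
            linarith)
          (fun a b ha hb hne => RenyiSchur.tangent_B hα0 hlt ha hb hne)
      rw [Finset.sum_neg_distrib, Finset.sum_neg_distrib] at S
      have S' : ∑ i, (q i) ^ α < ∑ i, (p i) ^ α := by linarith
      have hqs : 0 < ∑ i, (q i) ^ α := by
        obtain ⟨i0, hi0⟩ := RenyiSchur.exists_pos q hq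
        exact Finset.sum_pos' (fun i _ => Real.rpow_nonneg (hq.1 i) α)
          ⟨i0, Finset.mem_univ _, Real.rpow_pos_of_pos hi0 α⟩
      have hlog := Real.log_lt_log hqs S'
      have hc : 0 < 1 / (1 - α) := div_pos one_pos (by linarith)
      exact mul_lt_mul_of_pos_left hlog hc
    · -- α > 1
      have S : (∑ i, (p i) ^ α) < ∑ i, (q i) ^ α :=
        RenyiSchur.main d p q hp hq hmaj hnoperm
          (fun t => t ^ α) (fun t => α * t ^ (α - 1))
          (by simp [Real.zero_rpow (ne_of_gt hα0)])
          (by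
            intro a b ha hab
            exact mul_le_mul_of_nonneg_left
              (Real.rpow_le_rpow ha.le hab (by linarith)) hα0.le)
          (fun a b ha hb hne => RenyiSchur.tangent_A hgt ha hb hne)
      have hps : 0 < ∑ i, (p i) ^ α := by
        obtain ⟨i0, hi0⟩ := RenyiSchur.exists_pos p hp
        exact Finset.sum_pos' (fun i _ => Real.rpow_nonneg (hp.1 i) α)
          ⟨i0, Finset.mem_univ _, Real.rpow_pos_of_pos hi0 α⟩
      have hlog := Real.log_lt_log hps S
      have hc : 1 / (1 - α) < 0 := div_neg_of_pos_of_neg one_pos (by linarith)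
      exact mul_lt_mul_of_neg_left hlog hc
  · -- Shannon
    have S : (∑ i, (p i) * Real.log (p i)) < ∑ i, (q i) * Real.log (q i) :=
      RenyiSchur.main d p q hp hq hmaj hnoperm
        (fun t => t * Real.log t) (fun t => Real.log t + 1)
        (by simp)
        (by
          intro a b ha hab
          have := Real.log_le_log ha hab
          show Real.log a + 1 ≤ Real.log b + 1
          linarith)
        (fun a b ha hb hne => RenyiSchur.tangent_shannon ha hb hne)
    simp only [shannon]
    exact neg_lt_neg S
  · intro hppos hqpos
    constructor
    · intro α hα
      have S : (∑ i, (p i) ^ α) < ∑ i, (q i) ^ α :=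
        RenyiSchur.main_pos d p q hp hq hmaj hnoperm hppos hqpos
          (fun t => t ^ α) (fun t => α * t ^ (α - 1))
          (by
            intro a b ha hab
            have h1 : b ^ (α - 1) ≤ a ^ (α - 1) :=
              Real.rpow_le_rpow_of_nonpos ha hab (by linarith)
            show α * a ^ (α - 1) ≤ α * b ^ (α - 1)
            nlinarith [h1])
          (fun a b ha hb hne => RenyiSchur.tangent_C hα ha hb hne)
      have hne : (Finset.univ : Finset (Fin d)).Nonempty := by
        by_contra h
        rw [Finset.not_nonempty_iff_eq_empty] at h
        have h2 := hp.2
        rw [h] at h2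
        simp at h2
      have hps : 0 < ∑ i, (p i) ^ α :=
        Finset.sum_pos (fun i _ => Real.rpow_pos_of_pos (hppos i) α) hne
      have hlog := Real.log_lt_log hps S
      have hc : 0 < 1 / (1 - α) := div_pos one_pos (by linarith)
      have h3 := mul_lt_mul_of_pos_left hlog hc
      linarith
    · have S : (∑ i, -Real.log (p i)) < ∑ i, -Real.log (q i) :=
        RenyiSchur.main_pos d p q hp hq hmaj hnoperm hppos hqpos
          (fun t => -Real.log t) (fun t => -(1 / t))
          (by
            intro a b ha hab
            have := one_div_le_one_div_of_le ha hab
            linarith)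
          (fun a b ha hb hne => RenyiSchur.tangent_log ha hb hne)
      rw [Finset.sum_neg_distrib, Finset.sum_neg_distrib] at S
      linarith
end
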